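/- arXiv:2506.22203 — 14 statements merged into one kernel-verified Lean document; each statement's English description precedes it below -/
import Mathlib

section
/- The function g(x) = K₁·e^{a·x} + C₂·e^{λ₂·x} satisfies the smooth-fit conditions g′(x̂) = c and g″(x̂) = 0; explicitly, K₁·a·e^{a·x̂} + C₂·λ₂·e^{λ₂·x̂} = c and K₁·a²·e^{a·x̂} + C₂·λ₂²·e^{λ₂·x̂} = 0. -/
open Real Filter

lemma deriv_exp_comb (K L p q : ℝ) :
    deriv (fun x => K * Real.exp (p*x) + L * Real.exp (q*x)) =
    fun x => K*p * Real.exp (p*x) + L*q * Real.exp (q*x) := by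
  funext x
  have h1 : HasDerivAt (fun x : ℝ => K * Real.exp (p*x))
      (K*p * Real.exp (p*x)) x := by
    have := ((hasDerivAt_id x).const_mul p).exp.const_mul K
    simpa [mul_comm, mul_assoc, mul_left_comm] using this
  have h2 : HasDerivAt (fun x : ℝ => L * Real.exp (q*x))
      (L*q * Real.exp (q*x)) x := by
    have := ((hasDerivAt_id x).const_mul q).exp.const_mul L
    simpa [mul_comm, mul_assoc, mul_left_comm] using this
  exact (h1.add h2).deriv

theorem stmt_3
    (μ σ c a β : ℝ)
    (hσ : σ > 0) (hc : c > 0) (ha : a > 0) (hβ : β > 0)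
    (hβ' : β > μ * a + (1/2) * σ^2 * a^2)
    (lam₁ lam₂ K₁ xhat C₂ : ℝ)
    (hlam₁ : lam₁ = (-μ - Real.sqrt (μ^2 + 2*β*σ^2)) / σ^2)
    (hlam₂ : lam₂ = (-μ + Real.sqrt (μ^2 + 2*β*σ^2)) / σ^2)
    (hK₁ : K₁ = 1 / (β - μ*a - (1/2)*σ^2*a^2))
    (hxhat : xhat = (1/a) * Real.log (lam₂*c*(β - μ*a - (1/2)*σ^2*a^2) / (lam₂*a - a^2)))
    (hC₂ : C₂ = -(a^2 / (lam₂^2 * (β - μ*a - (1/2)*σ^2*a^2))) * Real.exp ((a - lam₂) * xhat))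
    :
    deriv (fun x => K₁ * Real.exp (a*x) + C₂ * Real.exp (lam₂*x)) xhat = c ∧
    deriv (deriv (fun x => K₁ * Real.exp (a*x) + C₂ * Real.exp (lam₂*x))) xhat = 0 ∧
    K₁*a*Real.exp (a*xhat) + C₂*lam₂*Real.exp (lam₂*xhat) = c ∧
    K₁*a^2*Real.exp (a*xhat) + C₂*lam₂^2*Real.exp (lam₂*xhat) = 0 := by
  set D := β - μ*a - (1/2)*σ^2*a^2 with hDdef
  have hD : D > 0 := by rw [hDdef]; linarith
  have hσ2 : σ^2 > 0 := by positivity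
  have hs2 : (Real.sqrt (μ^2 + 2*β*σ^2))^2 = μ^2 + 2*β*σ^2 :=
    Real.sq_sqrt (by positivity)
  have hsnn : Real.sqrt (μ^2 + 2*β*σ^2) ≥ 0 := Real.sqrt_nonneg _
  have hlam2a : lam₂ > a := by
    rw [hlam₂, gt_iff_lt, lt_div_iff₀ hσ2]
    nlinarith [sq_nonneg (Real.sqrt (μ^2 + 2*β*σ^2) - (μ + σ^2*a))]
  have hlam2pos : lam₂ > 0 := lt_trans ha hlam2a
  have hargpos : lam₂*c*D / (lam₂*a - a^2) > 0 := by
    apply div_pos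
    · positivity
    · nlinarith
  have hE : Real.exp (a*xhat) = lam₂*c*D / (lam₂*a - a^2) := by
    have : a * xhat = Real.log (lam₂*c*D / (lam₂*a - a^2)) := by
      rw [hxhat]; field_simp
    rw [this, Real.exp_log hargpos]
  have hmul : Real.exp ((a - lam₂)*xhat) * Real.exp (lam₂*xhat) = Real.exp (a*xhat) := by
    rw [← Real.exp_add]; ring_nf
  have hDne : D ≠ 0 := ne_of_gt hD
  have hlamne : lam₂ ≠ 0 := ne_of_gt hlam2pos
  have hdenne : lam₂*a - a^2 ≠ 0 := by nlinarith
  have hC2e : C₂ * Real.exp (lam₂*xhat)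
      = -(a^2/(lam₂^2*D)) * Real.exp (a*xhat) := by
    rw [hC₂, ← hmul]; ring
  have h3 : K₁*a*Real.exp (a*xhat) + C₂*lam₂*Real.exp (lam₂*xhat) = c := by
    rw [show C₂*lam₂*Real.exp (lam₂*xhat) = lam₂*(C₂*Real.exp (lam₂*xhat)) by ring,
      hC2e, hK₁, hE]
    field_simp
    ring_nf
    rw [← sub_mul, mul_inv_cancel₀ (sub_ne_zero.mpr (ne_of_gt hlam2a))]
  have h4 : K₁*a^2*Real.exp (a*xhat) + C₂*lam₂^2*Real.exp (lam₂*xhat) = 0 := by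
    rw [show C₂*lam₂^2*Real.exp (lam₂*xhat) = lam₂^2*(C₂*Real.exp (lam₂*xhat)) by ring,
      hC2e, hK₁]
    field_simp
    ring
  refine ⟨?_, ?_, h3, h4⟩
  · rw [deriv_exp_comb]
    exact h3
  · rw [deriv_exp_comb, deriv_exp_comb]
    show K₁*a*a*Real.exp (a*xhat) + C₂*lam₂*lam₂*Real.exp (lam₂*xhat) = 0
    linear_combination h4
end

section
/- The smooth-fit conditions determine the free boundary and the constant uniquely: if x* ∈ ℝ and D ∈ ℝ are such that the function g(x) = K₁·e^{a·x} + D·e^{λ₂·x} satisfies g′(x*) = c and g″(x*) = 0, then x* = x̂ and D = C₂. -/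
open Real Filter

lemma exp_hasDerivAt (k x : ℝ) :
    HasDerivAt (fun x => Real.exp (k*x)) (k * Real.exp (k*x)) x := by
  have h := (Real.hasDerivAt_exp (k*x)).comp x ((hasDerivAt_id x).const_mul k)
  exact h.congr_deriv (by ring)

lemma combo_deriv (p q k l : ℝ) :
    deriv (fun x => p * Real.exp (k*x) + q * Real.exp (l*x))
      = fun x => p * (k * Real.exp (k*x)) + q * (l * Real.exp (l*x)) := by
  funext x
  exact (((exp_hasDerivAt k x).const_mul p).add ((exp_hasDerivAt l x).const_mul q)).deriv

theorem stmt_4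
    (μ σ c a β : ℝ)
    (hσ : σ > 0) (hc : c > 0) (ha : a > 0) (hβ : β > 0)
    (hβ' : β > μ * a + (1/2) * σ^2 * a^2)
    (lam₁ lam₂ K₁ xhat C₂ : ℝ)
    (hlam₁ : lam₁ = (-μ - Real.sqrt (μ^2 + 2*β*σ^2)) / σ^2)
    (hlam₂ : lam₂ = (-μ + Real.sqrt (μ^2 + 2*β*σ^2)) / σ^2)
    (hK₁ : K₁ = 1 / (β - μ*a - (1/2)*σ^2*a^2))
    (hxhat : xhat = (1/a) * Real.log (lam₂*c*(β - μ*a - (1/2)*σ^2*a^2) / (lam₂*a - a^2)))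
    (hC₂ : C₂ = -(a^2 / (lam₂^2 * (β - μ*a - (1/2)*σ^2*a^2))) * Real.exp ((a - lam₂) * xhat))
    :
    ∀ xstar D : ℝ,
      deriv (fun x => K₁ * Real.exp (a*x) + D * Real.exp (lam₂*x)) xstar = c →
      deriv (deriv (fun x => K₁ * Real.exp (a*x) + D * Real.exp (lam₂*x))) xstar = 0 →
      xstar = xhat ∧ D = C₂ := by
  intro xstar D h1 h2
  set δ : ℝ := β - μ*a - (1/2)*σ^2*a^2 with hδdef
  have hδ : 0 < δ := by simp only [hδdef]; linarith
  have hK : K₁ * δ = 1 := by rw [hK₁]; field_simp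
  -- lam₂ > a
  have hs0 : 0 ≤ μ^2 + 2*β*σ^2 := by nlinarith
  have hs : Real.sqrt (μ^2 + 2*β*σ^2) ^ 2 = μ^2 + 2*β*σ^2 := Real.sq_sqrt hs0
  have hsnn : 0 ≤ Real.sqrt (μ^2 + 2*β*σ^2) := Real.sqrt_nonneg _
  have hsgt : Real.sqrt (μ^2 + 2*β*σ^2) > a*σ^2 + μ := by
    nlinarith [mul_pos (mul_pos hσ hσ) (show (0:ℝ) < β - (μ*a + (1/2)*σ^2*a^2) by linarith)]
  have hla : lam₂ > a := by
    rw [hlam₂]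
    rw [gt_iff_lt, lt_div_iff₀ (by positivity)]
    linarith
  have hl0 : 0 < lam₂ := lt_trans ha hla
  -- derivatives
  rw [combo_deriv K₁ D a lam₂] at h1
  have h2' : deriv (fun x => K₁ * (a * Real.exp (a*x)) + D * (lam₂ * Real.exp (lam₂*x))) xstar = 0 := by
    rw [← combo_deriv K₁ D a lam₂]; exact h2
  have hcombo2 : deriv (fun x => (K₁*a) * Real.exp (a*x) + (D*lam₂) * Real.exp (lam₂*x)) xstar = 0 := by
    rw [show (fun x => (K₁*a) * Real.exp (a*x) + (D*lam₂) * Real.exp (lam₂*x))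
        = (fun x => K₁ * (a * Real.exp (a*x)) + D * (lam₂ * Real.exp (lam₂*x))) by
      funext x; ring]
    exact h2'
  rw [combo_deriv (K₁*a) (D*lam₂) a lam₂] at hcombo2
  set E : ℝ := Real.exp (a*xstar) with hEdef
  set F : ℝ := Real.exp (lam₂*xstar) with hFdef
  have hE : 0 < E := Real.exp_pos _
  have hF : 0 < F := Real.exp_pos _
  have eq1 : K₁ * (a * E) + D * (lam₂ * F) = c := h1
  have eq2 : K₁*a * (a * E) + D*lam₂ * (lam₂ * F) = 0 := hcombo2
  have hden : 0 < lam₂*a - a^2 := by nlinarith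
  have hEval : E * (lam₂*a - a^2) = c * lam₂ * δ := by
    linear_combination (lam₂*δ)*eq1 - δ*eq2 - (a*lam₂*E - a^2*E)*hK
  have hEeq : E = lam₂*c*δ / (lam₂*a - a^2) := by
    rw [eq_div_iff (ne_of_gt hden)]; linarith [hEval]
  have hx : xstar = xhat := by
    rw [hxhat, ← hEeq, hEdef, Real.log_exp]
    field_simp
  refine ⟨hx, ?_⟩
  -- D = C₂
  have hDF : D * (lam₂^2 * F) * δ = -(a^2 * E) := by
    linear_combination δ*eq2 - (a^2*E)*hK
  have hCF : C₂ * (lam₂^2 * F) * δ = -(a^2 * E) := by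
    rw [hC₂, ← hx, show (a - lam₂) * xstar = a*xstar - lam₂*xstar by ring,
      Real.exp_sub, ← hEdef, ← hFdef]
    field_simp
  have hne : (lam₂^2 * F) * δ ≠ 0 := by positivity
  have : D * ((lam₂^2 * F) * δ) = C₂ * ((lam₂^2 * F) * δ) := by
    linear_combination hDF - hCF
  exact mul_right_cancel₀ hne this
end

section
/- For every x < x̂ one has K₁·a²·e^{a·x} + C₂·λ₂²·e^{λ₂·x} > 0; that is, the waiting-region candidate value function x ↦ K₁·e^{a·x} + C₂·e^{λ₂·x} has strictly positive second derivative on (−∞, x̂). -/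
open Real Filter

theorem stmt_5
    (μ σ c a β : ℝ)
    (hσ : σ > 0) (hc : c > 0) (ha : a > 0) (hβ : β > 0)
    (hβ' : β > μ * a + (1/2) * σ^2 * a^2)
    (lam₁ lam₂ K₁ xhat C₂ : ℝ)
    (hlam₁ : lam₁ = (-μ - Real.sqrt (μ^2 + 2*β*σ^2)) / σ^2)
    (hlam₂ : lam₂ = (-μ + Real.sqrt (μ^2 + 2*β*σ^2)) / σ^2)
    (hK₁ : K₁ = 1 / (β - μ*a - (1/2)*σ^2*a^2))
    (hxhat : xhat = (1/a) * Real.log (lam₂*c*(β - μ*a - (1/2)*σ^2*a^2) / (lam₂*a - a^2)))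
    (hC₂ : C₂ = -(a^2 / (lam₂^2 * (β - μ*a - (1/2)*σ^2*a^2))) * Real.exp ((a - lam₂) * xhat))
    :
    ∀ x : ℝ, x < xhat → K₁*a^2*Real.exp (a*x) + C₂*lam₂^2*Real.exp (lam₂*x) > 0 := by
  intro x hx
  have hD : 0 < β - μ*a - (1/2)*σ^2*a^2 := by linarith
  have hσ2 : (0:ℝ) < σ^2 := by positivity
  have hsq : (μ + a*σ^2)^2 < μ^2 + 2*β*σ^2 := by nlinarith
  have hs : μ + a*σ^2 < Real.sqrt (μ^2 + 2*β*σ^2) := by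
    rcases le_or_gt 0 (μ + a*σ^2) with h | h
    · exact (Real.lt_sqrt h).mpr hsq
    · have : (0:ℝ) < μ^2 + 2*β*σ^2 := by nlinarith
      have := Real.sqrt_pos.mpr this
      linarith
  have hla : a < lam₂ := by
    rw [hlam₂, lt_div_iff₀ hσ2]
    linarith
  have hlam0 : lam₂ ≠ 0 := by linarith
  have key : Real.exp ((a-lam₂)*xhat) * Real.exp (lam₂*x) < Real.exp (a*x) := by
    rw [← Real.exp_add]
    apply Real.exp_lt_exp.mpr
    nlinarith [mul_pos (sub_pos.mpr hla) (sub_pos.mpr hx)]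
  rw [hK₁, hC₂]
  set D := β - μ*a - (1/2)*σ^2*a^2 with hDdef
  have hD2 : (0:ℝ) < D := by rw [hDdef]; linarith
  have h1 : 0 < a^2 / D := by positivity
  have h2 : a^2/(lam₂^2*D) * lam₂^2 = a^2/D := by
    rw [mul_comm (lam₂^2) D, ← div_div, div_mul_cancel₀ _ (pow_ne_zero 2 hlam0)]
  have expand : 1 / D * a ^ 2 * Real.exp (a * x) +
      -(a ^ 2 / (lam₂ ^ 2 * D)) * Real.exp ((a - lam₂) * xhat) * lam₂ ^ 2 * Real.exp (lam₂ * x)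
      = a^2/D * (Real.exp (a*x) - Real.exp ((a-lam₂)*xhat) * Real.exp (lam₂*x)) := by
    linear_combination (-(Real.exp ((a - lam₂) * xhat) * Real.exp (lam₂ * x))) * h2
  rw [expand]
  exact mul_pos h1 (sub_pos.mpr key)
end

section
/- For every x < x̂ one has K₁·a·e^{a·x} + C₂·λ₂·e^{λ₂·x} < c; that is, the zero-order q-function c − V′(x) of the candidate optimal law is strictly positive on the waiting region (−∞, x̂), where V(x) = K₁·e^{a·x} + C₂·e^{λ₂·x} there. -/
open Real Filter

lemma key_mono (a L : ℝ) (ha : 0 < a) (hL : a < L) :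
    ∀ t < (0:ℝ), L * Real.exp (a*t) - a * Real.exp (L*t) < L - a := by
  have hmono : StrictMonoOn (fun t => L * Real.exp (a*t) - a * Real.exp (L*t)) (Set.Iic 0) := by
    apply strictMonoOn_of_deriv_pos (convex_Iic 0)
    · fun_prop
    · intro t ht
      rw [interior_Iic] at ht
      have h1 : HasDerivAt (fun t : ℝ => Real.exp (a*t)) (Real.exp (a*t) * a) t := by
        simpa using ((hasDerivAt_id t).const_mul a).exp
      have h2 : HasDerivAt (fun t : ℝ => Real.exp (L*t)) (Real.exp (L*t) * L) t := by
        simpa using ((hasDerivAt_id t).const_mul L).exp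
      have hd : HasDerivAt (fun t => L * Real.exp (a*t) - a * Real.exp (L*t))
          (L * (Real.exp (a*t) * a) - a * (Real.exp (L*t) * L)) t :=
        (h1.const_mul L).sub (h2.const_mul a)
      rw [hd.deriv]
      have hlt : Real.exp (L*t) < Real.exp (a*t) := by
        apply Real.exp_lt_exp.mpr
        have := Set.mem_Iio.mp ht
        nlinarith
      have hpos := mul_pos (mul_pos ha (ha.trans hL)) (sub_pos.mpr hlt)
      nlinarith
  intro t ht
  have := hmono (Set.mem_Iic.mpr ht.le) (Set.mem_Iic.mpr le_rfl) ht
  simpa using this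

theorem stmt_6
    (μ σ c a β : ℝ)
    (hσ : σ > 0) (hc : c > 0) (ha : a > 0) (hβ : β > 0)
    (hβ' : β > μ * a + (1/2) * σ^2 * a^2)
    (lam₁ lam₂ K₁ xhat C₂ : ℝ)
    (hlam₁ : lam₁ = (-μ - Real.sqrt (μ^2 + 2*β*σ^2)) / σ^2)
    (hlam₂ : lam₂ = (-μ + Real.sqrt (μ^2 + 2*β*σ^2)) / σ^2)
    (hK₁ : K₁ = 1 / (β - μ*a - (1/2)*σ^2*a^2))
    (hxhat : xhat = (1/a) * Real.log (lam₂*c*(β - μ*a - (1/2)*σ^2*a^2) / (lam₂*a - a^2)))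
    (hC₂ : C₂ = -(a^2 / (lam₂^2 * (β - μ*a - (1/2)*σ^2*a^2))) * Real.exp ((a - lam₂) * xhat))
    :
    ∀ x : ℝ, x < xhat → K₁*a*Real.exp (a*x) + C₂*lam₂*Real.exp (lam₂*x) < c := by
  set D : ℝ := β - μ*a - (1/2)*σ^2*a^2 with hDdef
  have hD : 0 < D := by simp only [hDdef]; linarith
  have hsnn : (0:ℝ) ≤ μ^2 + 2*β*σ^2 := by positivity
  have hs2 : Real.sqrt (μ^2 + 2*β*σ^2) ^ 2 = μ^2 + 2*β*σ^2 := Real.sq_sqrt hsnn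
  have hsqnn : 0 ≤ Real.sqrt (μ^2 + 2*β*σ^2) := Real.sqrt_nonneg _
  have hL : a < lam₂ := by
    rw [hlam₂, lt_div_iff₀ (by positivity : (0:ℝ) < σ^2)]
    have hgt : a*σ^2 + μ < Real.sqrt (μ^2 + 2*β*σ^2) := by
      rcases lt_or_ge (a*σ^2 + μ) 0 with h | h
      · linarith
      · by_contra h'
        push_neg at h'
        have hsq : Real.sqrt (μ^2 + 2*β*σ^2) ^ 2 ≤ (a*σ^2 + μ)^2 :=
          pow_le_pow_left₀ hsqnn h' 2
        rw [hs2] at hsq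
        nlinarith [mul_pos hσ hσ, sq_nonneg σ]
    linarith
  have hlam₂pos : 0 < lam₂ := lt_trans ha hL
  have hLa : 0 < lam₂ - a := by linarith
  have hden : 0 < lam₂*a - a^2 := by nlinarith
  have hargpos : 0 < lam₂*c*D / (lam₂*a - a^2) := div_pos (by positivity) hden
  have hE : Real.exp (a * xhat) = lam₂*c*D / (lam₂*a - a^2) := by
    rw [hxhat]
    have h0 : a * (1/a * Real.log (lam₂*c*D / (lam₂*a - a^2)))
        = Real.log (lam₂*c*D / (lam₂*a - a^2)) := by
      field_simp
    rw [h0, Real.exp_log hargpos]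
  have hdne : (lam₂*a - a^2) ≠ 0 := ne_of_gt hden
  have hDne : D ≠ 0 := ne_of_gt hD
  have hlne : lam₂ ≠ 0 := ne_of_gt hlam₂pos
  have hane : a ≠ 0 := ne_of_gt ha
  have hLane : lam₂ - a ≠ 0 := ne_of_gt hLa
  intro x hx
  set t : ℝ := x - xhat with htdef
  have ht : t < 0 := by simp only [htdef]; linarith
  have hg := key_mono a lam₂ ha hL t ht
  have hx1 : Real.exp (a*x) = Real.exp (a*xhat) * Real.exp (a*t) := by
    rw [← Real.exp_add, htdef]; ring_nf
  have hx2 : Real.exp (lam₂*x) = Real.exp (lam₂*xhat) * Real.exp (lam₂*t) := by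
    rw [← Real.exp_add, htdef]; ring_nf
  have hx3 : Real.exp ((a - lam₂)*xhat) * Real.exp (lam₂*xhat) = Real.exp (a*xhat) := by
    rw [← Real.exp_add]; ring_nf
  have c1 : K₁*a*Real.exp (a*x) = (c*lam₂/(lam₂-a)) * Real.exp (a*t) := by
    rw [hK₁, hx1, hE]
    field_simp
  have c2 : C₂*lam₂*Real.exp (lam₂*x) = -(c*a/(lam₂-a)) * Real.exp (lam₂*t) := by
    have step : C₂*lam₂*Real.exp (lam₂*x)
        = -(a^2/(lam₂^2*D)) * (Real.exp ((a-lam₂)*xhat) * Real.exp (lam₂*xhat))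
          * lam₂ * Real.exp (lam₂*t) := by
      rw [hC₂, hx2]; ring
    rw [step, hx3, hE]
    field_simp
  have heq : K₁*a*Real.exp (a*x) + C₂*lam₂*Real.exp (lam₂*x)
      = c / (lam₂ - a) * (lam₂ * Real.exp (a*t) - a * Real.exp (lam₂*t)) := by
    rw [c1, c2]; ring
  rw [heq]
  have hcpos : 0 < c / (lam₂ - a) := div_pos hc hLa
  calc c / (lam₂ - a) * (lam₂ * Real.exp (a*t) - a * Real.exp (lam₂*t))
      < c / (lam₂ - a) * (lam₂ - a) := mul_lt_mul_of_pos_left hg hcpos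
    _ = c := div_mul_cancel₀ c hLane
end

section
/- For every x ≥ x̂ one has e^{a·x} − β·( c·(x − x̂) + K₁·e^{a·x̂} + C₂·e^{λ₂·x̂} ) + μ·c ≥ 0, with equality when x = x̂; that is, the first-order q-function of the candidate optimal law is nonnegative on the action region [x̂, ∞) and vanishes at the free boundary x̂. -/
open Real Filter

set_option maxHeartbeats 1000000 in
theorem stmt_7
    (μ σ c a β : ℝ)
    (hσ : σ > 0) (hc : c > 0) (ha : a > 0) (hβ : β > 0)
    (hβ' : β > μ * a + (1/2) * σ^2 * a^2)
    (lam₁ lam₂ K₁ xhat C₂ : ℝ)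
    (hlam₁ : lam₁ = (-μ - Real.sqrt (μ^2 + 2*β*σ^2)) / σ^2)
    (hlam₂ : lam₂ = (-μ + Real.sqrt (μ^2 + 2*β*σ^2)) / σ^2)
    (hK₁ : K₁ = 1 / (β - μ*a - (1/2)*σ^2*a^2))
    (hxhat : xhat = (1/a) * Real.log (lam₂*c*(β - μ*a - (1/2)*σ^2*a^2) / (lam₂*a - a^2)))
    (hC₂ : C₂ = -(a^2 / (lam₂^2 * (β - μ*a - (1/2)*σ^2*a^2))) * Real.exp ((a - lam₂) * xhat))
    :
    (∀ x : ℝ, x ≥ xhat →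
      Real.exp (a*x) - β * (c*(x - xhat) + K₁*Real.exp (a*xhat) + C₂*Real.exp (lam₂*xhat)) + μ*c ≥ 0) ∧
    Real.exp (a*xhat) - β * (c*(xhat - xhat) + K₁*Real.exp (a*xhat) + C₂*Real.exp (lam₂*xhat)) + μ*c = 0 := by
  have hσ2 : σ^2 > 0 := by positivity
  have hspos : (0:ℝ) < Real.sqrt (μ^2 + 2*β*σ^2) := Real.sqrt_pos.mpr (by positivity)
  have hs2 : Real.sqrt (μ^2 + 2*β*σ^2) ^ 2 = μ^2 + 2*β*σ^2 :=
    Real.sq_sqrt (by positivity)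
  have hl : lam₂ * σ^2 = -μ + Real.sqrt (μ^2 + 2*β*σ^2) := by
    rw [hlam₂]; field_simp
  have hsval : Real.sqrt (μ^2 + 2*β*σ^2) = lam₂*σ^2 + μ := by linarith
  have hsq : (lam₂*σ^2 + μ)^2 = μ^2 + 2*β*σ^2 := by rw [← hsval]; exact hs2
  have hβeq : β = μ*lam₂ + (1/2)*σ^2*lam₂^2 := by
    have h3 : β*σ^2 = (μ*lam₂ + (1/2)*σ^2*lam₂^2)*σ^2 := by
      linear_combination (-(1:ℝ)/2)*hsq
    exact mul_right_cancel₀ (ne_of_gt hσ2) h3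
  have hD : β - μ*a - (1/2)*σ^2*a^2 > 0 := by linarith
  have hkey : μ + a*σ^2 < Real.sqrt (μ^2 + 2*β*σ^2) := by
    rcases le_or_gt (μ + a*σ^2) 0 with h | h
    · linarith
    · refine (Real.lt_sqrt h.le).mpr ?_
      have hq : (2*(μ*a) + σ^2*a^2) * σ^2 < (2*β)*σ^2 :=
        mul_lt_mul_of_pos_right (by linarith) hσ2
      have expand : (μ + a*σ^2)^2 = μ^2 + (2*(μ*a) + σ^2*a^2)*σ^2 := by ring
      rw [expand]; linarith
  have hla : lam₂ > a := (mul_lt_mul_iff_of_pos_right hσ2).mp (by linarith)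
  have hl0 : lam₂ > 0 := lt_trans ha hla
  set D := β - μ*a - (1/2)*σ^2*a^2 with hDdef
  set E := lam₂*c*D / (lam₂*a - a^2) with hEdef
  have hden : lam₂*a - a^2 > 0 := by
    have := mul_pos ha (show (0:ℝ) < lam₂ - a by linarith)
    nlinarith [this]
  have hEpos : E > 0 := by
    apply div_pos _ hden; positivity
  have hexp : Real.exp (a*xhat) = E := by
    rw [hxhat, show a*((1/a)*Real.log (lam₂*c*D/(lam₂*a - a^2))) =
      Real.log (lam₂*c*D/(lam₂*a - a^2)) by field_simp]
    exact Real.exp_log hEpos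
  have hC2E : C₂ * Real.exp (lam₂*xhat) = -(a^2/(lam₂^2*D)) * E := by
    rw [hC₂, mul_assoc, ← Real.exp_add, show (a - lam₂)*xhat + lam₂*xhat = a*xhat by ring,
      hexp]
  have hDfact : D = (lam₂ - a)*(μ + (1/2)*σ^2*(lam₂ + a)) := by
    rw [hDdef]; linear_combination hβeq
  have h1 : lam₂ - a > 0 := by linarith
  have h2 : μ + (1/2)*σ^2*(lam₂+a) > 0 := by
    by_contra hcon
    push_neg at hcon
    have hz : (lam₂ - a) * (μ + (1/2)*σ^2*(lam₂+a)) ≤ 0 :=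
      mul_nonpos_iff.2 (Or.inl ⟨h1.le, hcon⟩)
    rw [← hDfact] at hz
    linarith
  have hdne : lam₂*a - a^2 ≠ 0 := ne_of_gt hden
  have hlne : lam₂ ≠ 0 := ne_of_gt hl0
  have hDne : D ≠ 0 := ne_of_gt hD
  have hane : a ≠ 0 := ne_of_gt ha
  have hE5 : E*(lam₂*a - a^2) = lam₂*c*D := by
    rw [hEdef]; exact div_mul_cancel₀ _ hdne
  have hE3 : a*E = lam₂*c*(μ + (1/2)*σ^2*(lam₂+a)) := by
    apply mul_right_cancel₀ (sub_ne_zero.mpr (ne_of_gt hla))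
    linear_combination hE5 + lam₂*c*hDfact
  have hE4 : E = lam₂*c*(μ + (1/2)*σ^2*(lam₂+a))/a := by
    rw [eq_div_iff hane]
    linear_combination hE3
  have heq : E - β * (K₁*E + C₂*Real.exp (lam₂*xhat)) + μ*c = 0 := by
    rw [hC2E, hK₁]
    have step1 : 1/D*E + -(a^2/(lam₂^2*D))*E = E*(lam₂^2 - a^2)/(lam₂^2*D) := by
      field_simp [hlne, hDne]; ring
    have step2 : E*(lam₂^2 - a^2)/(lam₂^2*D) = c*(lam₂+a)/(a*lam₂) := by
      rw [div_eq_div_iff (by positivity) (by positivity)]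
      linear_combination (lam₂*(lam₂+a))*hE5
    rw [step1, step2, hE4, hβeq]
    field_simp [hane, hlne]
    ring
  have haE : a*E - β*c = lam₂*c*((1/2)*σ^2*a) := by
    linear_combination hE3 - c*hβeq
  have haE' : a*E - β*c ≥ 0 := by rw [haE]; positivity
  constructor
  · intro x hx
    have hexpx : Real.exp (a*x) ≥ E * (1 + a*(x - xhat)) := by
      have he : Real.exp (a*x) = E * Real.exp (a*(x - xhat)) := by
        rw [← hexp, ← Real.exp_add]; ring_nf
      rw [he]
      have hm := mul_le_mul_of_nonneg_left (Real.add_one_le_exp (a*(x - xhat))) hEpos.le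
      linarith
    have hxx : x - xhat ≥ 0 := by linarith
    have hprod : (a*E - β*c)*(x - xhat) ≥ 0 := mul_nonneg haE' hxx
    rw [hexp]
    linarith [heq, hexpx, hprod]
  · rw [hexp]
    simp only [sub_self, mul_zero, zero_add]
    linarith [heq]
end

section
/- The function V is twice continuously differentiable on ℝ and satisfies the Hamilton–Jacobi–Bellman variational equality min( e^{a·x} − β·V(x) + μ·V′(x) + (σ²/2)·V″(x), c − V′(x) ) = 0 for every x ∈ ℝ. -/
open Real Filter

lemma glue_hasDerivAt {f g : ℝ → ℝ} {x₀ d : ℝ}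
    (hf : HasDerivAt f d x₀) (hg : HasDerivAt g d x₀) (hfg : f x₀ = g x₀) :
    HasDerivAt (fun x => if x < x₀ then f x else g x) d x₀ := by
  have h1 : HasDerivWithinAt (fun x => if x < x₀ then f x else g x) d (Set.Iic x₀) x₀ := by
    refine (hf.hasDerivWithinAt).congr (fun y hy => ?_) (by simp [hfg.symm])
    rcases lt_or_eq_of_le (Set.mem_Iic.mp hy) with h | h
    · simp [h]
    · simp [h, hfg.symm]
  have h2 : HasDerivWithinAt (fun x => if x < x₀ then f x else g x) d (Set.Ici x₀) x₀ := by
    refine (hg.hasDerivWithinAt).congr (fun y hy => ?_) (by simp)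
    simp [not_lt.mpr (Set.mem_Ici.mp hy)]
  have h3 := h1.union h2
  rwa [Set.Iic_union_Ici, hasDerivWithinAt_univ] at h3

set_option maxHeartbeats 1000000 in
theorem stmt_8
    (μ σ c a β : ℝ)
    (hσ : σ > 0) (hc : c > 0) (ha : a > 0) (hβ : β > 0)
    (hβ' : β > μ * a + (1/2) * σ^2 * a^2)
    (lam₁ lam₂ K₁ xhat C₂ : ℝ)
    (hlam₁ : lam₁ = (-μ - Real.sqrt (μ^2 + 2*β*σ^2)) / σ^2)
    (hlam₂ : lam₂ = (-μ + Real.sqrt (μ^2 + 2*β*σ^2)) / σ^2)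
    (hK₁ : K₁ = 1 / (β - μ*a - (1/2)*σ^2*a^2))
    (hxhat : xhat = (1/a) * Real.log (lam₂*c*(β - μ*a - (1/2)*σ^2*a^2) / (lam₂*a - a^2)))
    (hC₂ : C₂ = -(a^2 / (lam₂^2 * (β - μ*a - (1/2)*σ^2*a^2))) * Real.exp ((a - lam₂) * xhat))
    (V : ℝ → ℝ)
    (hV : ∀ x, V x = if x < xhat then K₁ * Real.exp (a*x) + C₂ * Real.exp (lam₂*x)
      else c*(x - xhat) + K₁ * Real.exp (a*xhat) + C₂ * Real.exp (lam₂*xhat))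
    :
    ContDiff ℝ 2 V ∧
    ∀ x : ℝ,
      min (Real.exp (a*x) - β * V x + μ * deriv V x + (σ^2/2) * deriv (deriv V) x)
          (c - deriv V x) = 0 := by
  have hσ2 : (0:ℝ) < σ^2 := by positivity
  have hD : (0:ℝ) < β - μ*a - (1/2)*σ^2*a^2 := by linarith
  have hDne : β - μ*a - (1/2)*σ^2*a^2 ≠ 0 := ne_of_gt hD
  have hane : a ≠ 0 := ne_of_gt ha
  have hs0 : 0 ≤ Real.sqrt (μ^2 + 2*β*σ^2) := Real.sqrt_nonneg _
  have hs2 : Real.sqrt (μ^2 + 2*β*σ^2)^2 = μ^2 + 2*β*σ^2 := Real.sq_sqrt (by positivity)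
  have hroot : σ^2/2*lam₂^2 + μ*lam₂ = β := by
    rw [hlam₂]; field_simp; nlinarith [hs2, Real.sq_sqrt (show (0:ℝ) ≤ μ^2 + σ^2*2*β by positivity)]
  have hla : a < lam₂ := by
    rw [hlam₂, lt_div_iff₀ hσ2]
    nlinarith [hs2, hs0, mul_pos hσ2 hD]
  have hl2pos : 0 < lam₂ := lt_trans ha hla
  have hl2ne : lam₂ ≠ 0 := ne_of_gt hl2pos
  have hdenpos : 0 < lam₂*a - a^2 := by nlinarith
  have hargpos : 0 < lam₂*c*(β - μ*a - (1/2)*σ^2*a^2) / (lam₂*a - a^2) :=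
    div_pos (by positivity) hdenpos
  have hE : Real.exp (a*xhat) = lam₂*c*(β - μ*a - (1/2)*σ^2*a^2) / (lam₂*a - a^2) := by
    have hax : a * xhat = Real.log (lam₂*c*(β - μ*a - (1/2)*σ^2*a^2) / (lam₂*a - a^2)) := by
      rw [hxhat]; field_simp
    rw [hax, Real.exp_log hargpos]
  have hPne : Real.exp (lam₂*xhat) ≠ 0 := (Real.exp_pos _).ne'
  have hEpos : 0 < Real.exp (a*xhat) := Real.exp_pos _
  have hC2' : C₂ = (-(a^2 / (lam₂^2 * (β - μ*a - (1/2)*σ^2*a^2))) * Real.exp (a*xhat)) / Real.exp (lam₂*xhat) := by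
    rw [eq_div_iff hPne, hC₂, mul_assoc, ← Real.exp_add]
    congr 2
    ring
  -- abbreviate
  obtain ⟨D, hDdef⟩ : ∃ D, D = β - μ*a - (1/2)*σ^2*a^2 := ⟨_, rfl⟩
  obtain ⟨E, hEdef⟩ : ∃ E, E = Real.exp (a*xhat) := ⟨_, rfl⟩
  obtain ⟨P, hPdef⟩ : ∃ P, P = Real.exp (lam₂*xhat) := ⟨_, rfl⟩
  rw [← hDdef] at hD hDne hK₁ hE hC2' hargpos
  rw [← hEdef] at hE hC2' hEpos
  rw [← hPdef] at hC2' hPne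
  have hPpos : 0 < P := hPdef ▸ Real.exp_pos _
  have hfit1 : K₁*a*E + C₂*lam₂*P = c := by
    rw [hC2', hK₁, hE]
    field_simp
    ring
    rw [← sub_mul, mul_inv_cancel₀ (sub_ne_zero.mpr (ne_of_gt hla))]
  have hfit0 : K₁*a^2*E + C₂*lam₂^2*P = 0 := by
    rw [hC2', hK₁]
    field_simp
    ring
  have hK : K₁ * D = 1 := by rw [hK₁]; field_simp
  have hODE : ∀ x, Real.exp (a*x) - β*(K₁*Real.exp (a*x) + C₂*Real.exp (lam₂*x))
      + μ*(K₁*a*Real.exp (a*x) + C₂*lam₂*Real.exp (lam₂*x))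
      + σ^2/2*(K₁*a^2*Real.exp (a*x) + C₂*lam₂^2*Real.exp (lam₂*x)) = 0 := by
    intro x
    have hK2 : K₁ * (β - μ*a - (1/2)*σ^2*a^2) = 1 := hDdef ▸ hK
    linear_combination (-Real.exp (a*x)) * hK2 + (C₂ * Real.exp (lam₂*x)) * hroot
  have hgrad : ∀ x, 0 ≤ c - (K₁*a*Real.exp (a*x) + C₂*lam₂*Real.exp (lam₂*x)) := by
    intro x
    have hconv : Real.exp (a*(x - xhat)) ≤ (1 - a/lam₂) + (a/lam₂) * Real.exp (lam₂*(x - xhat)) := by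
      have h0 : (0:ℝ) ≤ 1 - a/lam₂ := by
        rw [sub_nonneg]; exact le_of_lt ((div_lt_one hl2pos).mpr hla)
      have h1 : (0:ℝ) ≤ a/lam₂ := by positivity
      have h2 := convexOn_exp.2 (Set.mem_univ (0:ℝ)) (Set.mem_univ (lam₂*(x - xhat))) h0 h1 (by ring)
      simp only [smul_eq_mul, mul_zero, zero_add, Real.exp_zero, mul_one] at h2
      have h3 : a/lam₂ * (lam₂*(x-xhat)) = a*(x-xhat) := by field_simp
      rw [h3] at h2
      linarith
    have e1 : Real.exp (a*x) = E * Real.exp (a*(x - xhat)) := by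
      rw [hEdef, ← Real.exp_add]; congr 1; ring
    have e2 : Real.exp (lam₂*x) = P * Real.exp (lam₂*(x - xhat)) := by
      rw [hPdef, ← Real.exp_add]; congr 1; ring
    have hEq : c - (K₁*a*Real.exp (a*x) + C₂*lam₂*Real.exp (lam₂*x))
        = (a * E / D) *
          ((1 - Real.exp (a*(x - xhat))) - (a/lam₂)*(1 - Real.exp (lam₂*(x - xhat)))) := by
      rw [← hfit1, e1, e2, hC2', hK₁]
      field_simp
      ring
    rw [hEq]
    apply mul_nonneg (by positivity)
    have : a/lam₂ * (1 - Real.exp (lam₂*(x-xhat))) ≤ 1 - Real.exp (a*(x-xhat)) := by linarith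
    linarith
  have hfit1' : K₁*a*Real.exp (a*xhat) + C₂*lam₂*Real.exp (lam₂*xhat) = c := by
    rw [← hEdef, ← hPdef]; exact hfit1
  have hfit0' : K₁*a^2*Real.exp (a*xhat) + C₂*lam₂^2*Real.exp (lam₂*xhat) = 0 := by
    rw [← hEdef, ← hPdef]; exact hfit0
  -- elementary derivatives
  have hda : ∀ (k x : ℝ), HasDerivAt (fun y => Real.exp (k*y)) (k * Real.exp (k*x)) x := by
    intro k x
    simpa [mul_comm] using ((hasDerivAt_id x).const_mul k).exp
  have hgD : ∀ x, HasDerivAt (fun y => K₁ * Real.exp (a*y) + C₂ * Real.exp (lam₂*y))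
      (K₁*a*Real.exp (a*x) + C₂*lam₂*Real.exp (lam₂*x)) x := by
    intro x
    have h := ((hda a x).const_mul K₁).add ((hda lam₂ x).const_mul C₂)
    exact h.congr_deriv (by ring)
  have hg1D : ∀ x, HasDerivAt (fun y => K₁*a * Real.exp (a*y) + C₂*lam₂ * Real.exp (lam₂*y))
      (K₁*a^2*Real.exp (a*x) + C₂*lam₂^2*Real.exp (lam₂*x)) x := by
    intro x
    have h := ((hda a x).const_mul (K₁*a)).add ((hda lam₂ x).const_mul (C₂*lam₂))
    exact h.congr_deriv (by ring)
  have hhD : ∀ x, HasDerivAt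
      (fun y => c*(y - xhat) + K₁ * Real.exp (a*xhat) + C₂ * Real.exp (lam₂*xhat)) c x := by
    intro x
    have h := ((((hasDerivAt_id x).sub_const xhat).const_mul c).add_const
        (K₁ * Real.exp (a*xhat))).add_const (C₂ * Real.exp (lam₂*xhat))
    simpa using h
  have hVeq : V = fun x => if x < xhat then K₁ * Real.exp (a*x) + C₂ * Real.exp (lam₂*x)
      else c*(x - xhat) + K₁ * Real.exp (a*xhat) + C₂ * Real.exp (lam₂*xhat) := funext hV
  have hVd : ∀ x, HasDerivAt V
      (if x < xhat then K₁*a*Real.exp (a*x) + C₂*lam₂*Real.exp (lam₂*x) else c) x := by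
    intro x
    rcases lt_trichotomy x xhat with h | h | h
    · rw [if_pos h]
      refine HasDerivAt.congr_of_eventuallyEq (hgD x) ?_
      filter_upwards [Iio_mem_nhds h] with y hy
      rw [hV y, if_pos (Set.mem_Iio.mp hy)]
    · subst h
      rw [if_neg (lt_irrefl x)]
      rw [hVeq]
      have hf : HasDerivAt (fun y => K₁ * Real.exp (a*y) + C₂ * Real.exp (lam₂*y)) c x :=
        hfit1' ▸ hgD x
      exact glue_hasDerivAt hf (hhD x) (by simp)
    · rw [if_neg (not_lt.mpr h.le)]
      refine HasDerivAt.congr_of_eventuallyEq (hhD x) ?_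
      filter_upwards [Ioi_mem_nhds h] with y hy
      rw [hV y, if_neg (not_lt.mpr (le_of_lt (Set.mem_Ioi.mp hy)))]
  have hVd' : deriv V
      = fun x => if x < xhat then K₁*a*Real.exp (a*x) + C₂*lam₂*Real.exp (lam₂*x) else c :=
    funext fun x => (hVd x).deriv
  have hV1d : ∀ x, HasDerivAt
      (fun y => if y < xhat then K₁*a*Real.exp (a*y) + C₂*lam₂*Real.exp (lam₂*y) else c)
      (if x < xhat then K₁*a^2*Real.exp (a*x) + C₂*lam₂^2*Real.exp (lam₂*x) else 0) x := by
    intro x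
    rcases lt_trichotomy x xhat with h | h | h
    · rw [if_pos h]
      refine HasDerivAt.congr_of_eventuallyEq (hg1D x) ?_
      filter_upwards [Iio_mem_nhds h] with y hy
      rw [if_pos (Set.mem_Iio.mp hy)]
    · subst h
      rw [if_neg (lt_irrefl x)]
      have hf : HasDerivAt (fun y => K₁*a * Real.exp (a*y) + C₂*lam₂ * Real.exp (lam₂*y)) 0 x :=
        hfit0' ▸ hg1D x
      exact glue_hasDerivAt hf (hasDerivAt_const x c) (by simpa using hfit1')
    · rw [if_neg (not_lt.mpr h.le)]
      refine HasDerivAt.congr_of_eventuallyEq (hasDerivAt_const x c) ?_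
      filter_upwards [Ioi_mem_nhds h] with y hy
      rw [if_neg (not_lt.mpr (le_of_lt (Set.mem_Ioi.mp hy)))]
  have hV1d' : (deriv fun x => if x < xhat
        then K₁*a*Real.exp (a*x) + C₂*lam₂*Real.exp (lam₂*x) else c)
      = fun x => if x < xhat then K₁*a^2*Real.exp (a*x) + C₂*lam₂^2*Real.exp (lam₂*x) else 0 :=
    funext fun x => (hV1d x).deriv
  have hcont2 : Continuous (fun x => if x < xhat
      then K₁*a^2*Real.exp (a*x) + C₂*lam₂^2*Real.exp (lam₂*x) else (0:ℝ)) := by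
    have heq : (fun x => if x < xhat
          then K₁*a^2*Real.exp (a*x) + C₂*lam₂^2*Real.exp (lam₂*x) else (0:ℝ))
        = fun x => if x ≤ xhat
          then K₁*a^2*Real.exp (a*x) + C₂*lam₂^2*Real.exp (lam₂*x) else (0:ℝ) := by
      funext y
      rcases lt_trichotomy y xhat with h | h | h
      · rw [if_pos h, if_pos h.le]
      · subst h; rw [if_neg (lt_irrefl _), if_pos le_rfl, hfit0']
      · rw [if_neg (not_lt.mpr h.le), if_neg (not_le.mpr h)]
    rw [heq]
    exact Continuous.if_le (by fun_prop) continuous_const continuous_id continuous_const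
      (fun y hy => by rw [hy]; exact hfit0')
  have hdiffV : Differentiable ℝ V := fun x => (hVd x).differentiableAt
  have hcd : ContDiff ℝ 2 V := by
    rw [show (2 : WithTop ℕ∞) = 1 + 1 from one_add_one_eq_two.symm, contDiff_succ_iff_deriv]
    refine ⟨hdiffV, by simp, ?_⟩
    rw [hVd', show (1 : WithTop ℕ∞) = 0 + 1 from (zero_add 1).symm, contDiff_succ_iff_deriv]
    refine ⟨fun x => (hV1d x).differentiableAt, by simp, ?_⟩
    rw [hV1d', contDiff_zero]
    exact hcont2
  refine ⟨hcd, ?_⟩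
  intro x
  rw [hVd', hV1d', hV x]
  rcases lt_or_ge x xhat with h | h
  · simp only [if_pos h]
    rw [hODE x]
    exact min_eq_left (hgrad x)
  · simp only [if_neg (not_lt.mpr h)]
    have ht : 0 ≤ x - xhat := by linarith
    have hfirst : 0 ≤ Real.exp (a*x)
        - β*(c*(x-xhat) + K₁*Real.exp (a*xhat) + C₂*Real.exp (lam₂*xhat)) + μ*c + σ^2/2*0 := by
      rw [← hEdef, ← hPdef]
      have hu : Real.exp (a*x) = E * Real.exp (a*(x - xhat)) := by
        rw [hEdef, ← Real.exp_add]; congr 1; ring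
      have hb : a*(x-xhat) + 1 ≤ Real.exp (a*(x-xhat)) := by
        linarith [Real.add_one_le_exp (a*(x-xhat))]
      have hβg : β*(K₁*E + C₂*P) = E + μ*c := by
        have h1 := hODE xhat
        rw [← hEdef, ← hPdef] at h1
        linear_combination (-1) * h1 + μ * hfit1 + (σ^2/2) * hfit0
      have hEa : E*a = β*c + c*σ^2*a*lam₂/2 := by
        have hne : lam₂ - a ≠ 0 := ne_of_gt (by linarith)
        apply mul_right_cancel₀ hne
        have h9 : E * (lam₂*a - a^2) = lam₂*c*D := by
          rw [hE]; field_simp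
        rw [hDdef] at h9
        linear_combination h9 - (c*a) * hroot
      have h5 : E * (a*(x-xhat) + 1) ≤ E * Real.exp (a*(x-xhat)) :=
        mul_le_mul_of_nonneg_left hb hEpos.le
      have h6 : 0 ≤ (c*σ^2*a*lam₂/2) * (x - xhat) := mul_nonneg (by positivity) ht
      have h7 : (E*a) * (x-xhat) = (β*c + c*σ^2*a*lam₂/2)*(x-xhat) := by rw [hEa]
      rw [hu]
      linarith [h5, h6, h7, hβg]
    simp only [sub_self]
    exact min_eq_right hfirst
end

section
/- The function K₂ is strictly decreasing on (−∞, x̂] and strictly increasing on [x̂, ∞); consequently x̂ is the unique global minimizer of K₂ on ℝ. -/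
open Real Filter

theorem stmt_10
    (μ σ c a β : ℝ)
    (hσ : σ > 0) (hc : c > 0) (ha : a > 0) (hβ : β > 0)
    (hβ' : β > μ * a + (1/2) * σ^2 * a^2)
    (lam₁ lam₂ K₁ xhat C₂ : ℝ)
    (hlam₁ : lam₁ = (-μ - Real.sqrt (μ^2 + 2*β*σ^2)) / σ^2)
    (hlam₂ : lam₂ = (-μ + Real.sqrt (μ^2 + 2*β*σ^2)) / σ^2)
    (hK₁ : K₁ = 1 / (β - μ*a - (1/2)*σ^2*a^2))
    (hxhat : xhat = (1/a) * Real.log (lam₂*c*(β - μ*a - (1/2)*σ^2*a^2) / (lam₂*a - a^2)))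
    (hC₂ : C₂ = -(a^2 / (lam₂^2 * (β - μ*a - (1/2)*σ^2*a^2))) * Real.exp ((a - lam₂) * xhat))
    (K₂ : ℝ → ℝ)
    (hK₂ : ∀ z, K₂ z = (c - K₁*a*Real.exp (a*z)) / (lam₂ * Real.exp (lam₂*z)))
    :
    StrictAntiOn K₂ (Set.Iic xhat) ∧
    StrictMonoOn K₂ (Set.Ici xhat) ∧
    (∀ z : ℝ, z ≠ xhat → K₂ xhat < K₂ z) := by
  have hD : 0 < β - μ*a - (1/2)*σ^2*a^2 := by nlinarith
  set s := Real.sqrt (μ^2 + 2*β*σ^2) with hs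
  have hs0 : 0 ≤ s := Real.sqrt_nonneg _
  have hs2 : s^2 = μ^2 + 2*β*σ^2 := Real.sq_sqrt (by positivity)
  have hσ2 : (0:ℝ) < σ^2 := by positivity
  have hsμ : μ + σ^2 * a < s := by nlinarith [sq_nonneg (s + μ + σ^2*a)]
  have hlam2a : a < lam₂ := by
    rw [hlam₂, lt_div_iff₀ hσ2]; linarith
  have hlam2pos : 0 < lam₂ := lt_trans ha hlam2a
  have hK₁pos : 0 < K₁ := by rw [hK₁]; positivity
  set M := K₁ * a * (lam₂ - a) / lam₂ with hM
  have hMpos : 0 < M := by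
    apply div_pos _ hlam2pos
    have : 0 < lam₂ - a := by linarith
    positivity
  -- exp (a * xhat) = c / M
  have hexhat : Real.exp (a * xhat) = c / M := by
    have harg : lam₂*c*(β - μ*a - (1/2)*σ^2*a^2) / (lam₂*a - a^2) = c / M := by
      rw [hM, hK₁]
      field_simp
    rw [hxhat]
    have hpos : 0 < c / M := div_pos hc hMpos
    rw [harg] at *
    rw [show a * ((1/a) * Real.log (c/M)) = Real.log (c/M) by field_simp]
    exact Real.exp_log hpos
  -- rewrite K₂
  have hK₂' : ∀ z, K₂ z = c/lam₂ * Real.exp (-lam₂*z) - K₁*a/lam₂ * Real.exp ((a-lam₂)*z) := by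
    intro z
    rw [hK₂]
    have h1 : Real.exp ((a-lam₂)*z) = Real.exp (a*z) / Real.exp (lam₂*z) := by
      rw [← Real.exp_sub]; ring_nf
    have h2 : Real.exp (-lam₂*z) = 1 / Real.exp (lam₂*z) := by
      rw [neg_mul, Real.exp_neg, one_div]
    rw [h1, h2]
    have he : Real.exp (lam₂*z) ≠ 0 := Real.exp_ne_zero _
    field_simp
  -- derivative
  have hderiv : ∀ z, HasDerivAt K₂ (Real.exp (-lam₂*z) * (-c + M * Real.exp (a*z))) z := by
    intro z
    have h1 : HasDerivAt (fun z : ℝ => Real.exp (-lam₂*z)) (Real.exp (-lam₂*z) * (-lam₂)) z := by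
      simpa using ((hasDerivAt_id z).const_mul (-lam₂)).exp
    have h2 : HasDerivAt (fun z : ℝ => Real.exp ((a-lam₂)*z)) (Real.exp ((a-lam₂)*z) * (a-lam₂)) z := by
      simpa using ((hasDerivAt_id z).const_mul (a-lam₂)).exp
    have h3 := ((h1.const_mul (c/lam₂)).sub (h2.const_mul (K₁*a/lam₂)))
    have hfun : K₂ = fun z => c/lam₂ * Real.exp (-lam₂*z) - K₁*a/lam₂ * Real.exp ((a-lam₂)*z) :=
      funext hK₂'
    rw [hfun]
    refine h3.congr_deriv ?_
    rw [hM]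
    have h1' : Real.exp ((a-lam₂)*z) = Real.exp (a*z) * Real.exp (-lam₂*z) := by
      rw [← Real.exp_add]; ring_nf
    rw [h1']
    field_simp
    ring
  have hcont : Continuous K₂ := by
    have : Differentiable ℝ K₂ := fun z => (hderiv z).differentiableAt
    exact this.continuous
  -- sign of d
  have hdneg : ∀ z < xhat, Real.exp (-lam₂*z) * (-c + M * Real.exp (a*z)) < 0 := by
    intro z hz
    have hax : a*z < a*xhat := mul_lt_mul_of_pos_left hz ha
    have : M * Real.exp (a*z) < M * Real.exp (a*xhat) :=
      mul_lt_mul_of_pos_left (Real.exp_lt_exp.mpr hax) hMpos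
    rw [hexhat] at this
    have hc' : M * Real.exp (a*z) < c := by
      rw [mul_div_cancel₀ c (ne_of_gt hMpos)] at this
      exact this
    exact mul_neg_of_pos_of_neg (Real.exp_pos _) (by linarith)
  have hdpos : ∀ z, xhat < z → 0 < Real.exp (-lam₂*z) * (-c + M * Real.exp (a*z)) := by
    intro z hz
    have hax : a*xhat < a*z := mul_lt_mul_of_pos_left hz ha
    have : M * Real.exp (a*xhat) < M * Real.exp (a*z) :=
      mul_lt_mul_of_pos_left (Real.exp_lt_exp.mpr hax) hMpos
    rw [hexhat] at this
    have hc' : c < M * Real.exp (a*z) := by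
      rw [mul_div_cancel₀ c (ne_of_gt hMpos)] at this
      exact this
    exact mul_pos (Real.exp_pos _) (by linarith)
  have hanti : StrictAntiOn K₂ (Set.Iic xhat) := by
    apply strictAntiOn_of_deriv_neg (convex_Iic _) (hcont.continuousOn)
    intro z hz
    rw [interior_Iic] at hz
    rw [(hderiv z).deriv]
    exact hdneg z hz
  have hmono : StrictMonoOn K₂ (Set.Ici xhat) := by
    apply strictMonoOn_of_deriv_pos (convex_Ici _) (hcont.continuousOn)
    intro z hz
    rw [interior_Ici] at hz
    rw [(hderiv z).deriv]
    exact hdpos z hz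
  refine ⟨hanti, hmono, fun z hz => ?_⟩
  rcases lt_or_gt_of_ne hz with h | h
  · exact hanti (Set.mem_Iic.mpr (le_of_lt h)) (Set.mem_Iic.mpr le_rfl) h
  · exact hmono (Set.mem_Ici.mpr le_rfl) (Set.mem_Ici.mpr (le_of_lt h)) h
end

section
/- For every z ∈ ℝ, if K₂(z) ≥ 0 then z < x̂. -/
open Real Filter

theorem stmt_12
    (μ σ c a β : ℝ)
    (hσ : σ > 0) (hc : c > 0) (ha : a > 0) (hβ : β > 0)
    (hβ' : β > μ * a + (1/2) * σ^2 * a^2)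
    (lam₁ lam₂ K₁ xhat C₂ : ℝ)
    (hlam₁ : lam₁ = (-μ - Real.sqrt (μ^2 + 2*β*σ^2)) / σ^2)
    (hlam₂ : lam₂ = (-μ + Real.sqrt (μ^2 + 2*β*σ^2)) / σ^2)
    (hK₁ : K₁ = 1 / (β - μ*a - (1/2)*σ^2*a^2))
    (hxhat : xhat = (1/a) * Real.log (lam₂*c*(β - μ*a - (1/2)*σ^2*a^2) / (lam₂*a - a^2)))
    (hC₂ : C₂ = -(a^2 / (lam₂^2 * (β - μ*a - (1/2)*σ^2*a^2))) * Real.exp ((a - lam₂) * xhat))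
    (K₂ : ℝ → ℝ)
    (hK₂ : ∀ z, K₂ z = (c - K₁*a*Real.exp (a*z)) / (lam₂ * Real.exp (lam₂*z)))
    :
    ∀ z : ℝ, K₂ z ≥ 0 → z < xhat := by
  intro z hz
  have hσ2 : (0:ℝ) < σ^2 := by positivity
  set D := β - μ*a - (1/2)*σ^2*a^2 with hDdef
  have hD : 0 < D := by simp only [hDdef]; linarith
  set s := Real.sqrt (μ^2 + 2*β*σ^2) with hsdef
  have hs_nonneg : 0 ≤ s := Real.sqrt_nonneg _
  have hs2 : s^2 = μ^2 + 2*β*σ^2 := Real.sq_sqrt (by positivity)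
  have hs_pos : 0 < s := by nlinarith
  have hsgt : μ + σ^2*a < s := by nlinarith [sq_nonneg (s + μ + σ^2*a), sq_nonneg (s - μ - σ^2*a)]
  have hal : a < lam₂ := by
    rw [hlam₂, lt_div_iff₀ hσ2]
    linarith
  have hlam₂pos : 0 < lam₂ := lt_trans ha hal
  have hden : 0 < lam₂ * Real.exp (lam₂*z) := by positivity
  have hnum : 0 ≤ c - K₁*a*Real.exp (a*z) := by
    have h := hz
    rw [hK₂ z] at h
    have := (le_div_iff₀ hden).mp h
    linarith
  have hKa : a * Real.exp (a*z) ≤ c * D := by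
    rw [hK₁] at hnum
    have h1 : (1/D)*a*Real.exp (a*z) ≤ c := by linarith
    calc a * Real.exp (a*z) = ((1/D)*a*Real.exp (a*z)) * D := by
          field_simp
      _ ≤ c * D := by nlinarith
  have hpow : 0 < lam₂*a - a^2 := by
    have h := mul_pos ha (sub_pos.mpr hal)
    have he : a*(lam₂-a) = lam₂*a - a^2 := by ring
    linarith
  have hexp_lt : Real.exp (a*z) < lam₂*c*D / (lam₂*a - a^2) := by
    rw [lt_div_iff₀ hpow]
    have h2 : Real.exp (a*z) * (lam₂*a - a^2) = (a * Real.exp (a*z)) * (lam₂ - a) := by ring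
    rw [h2]
    have h3 : (a * Real.exp (a*z)) * (lam₂ - a) ≤ (c*D) * (lam₂ - a) :=
      mul_le_mul_of_nonneg_right hKa (by linarith)
    have h4 : (c*D) * (lam₂ - a) < lam₂*c*D := by
      have h5 : lam₂*c*D - (c*D)*(lam₂-a) = (c*D)*a := by ring
      have h6 := mul_pos (mul_pos hc hD) ha
      linarith
    linarith
  have harg : 0 < lam₂*c*D / (lam₂*a - a^2) := by positivity
  have hlog : a*z < Real.log (lam₂*c*D / (lam₂*a - a^2)) := by
    have := Real.log_lt_log (Real.exp_pos _) hexp_lt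
    rwa [Real.log_exp] at this
  rw [hxhat]
  have h6 := mul_lt_mul_of_pos_left hlog (by positivity : (0:ℝ) < 1/a)
  have h7 : (1/a)*(a*z) = z := by field_simp
  rw [h7] at h6
  exact h6
end

section
/- Let κ < 0 be a real constant and suppose x′ < x″ are two distinct real solutions of the equation K₁·a·e^{a·x} + κ·λ₂·e^{λ₂·x} = c. Then x′ < x̂ < x″ (any two distinct crossings of the level c straddle the optimal free boundary x̂). -/
open Real Filter

set_option maxHeartbeats 800000 in
theorem stmt_13
    (μ σ c a β : ℝ)
    (hσ : σ > 0) (hc : c > 0) (ha : a > 0) (hβ : β > 0)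
    (hβ' : β > μ * a + (1/2) * σ^2 * a^2)
    (lam₁ lam₂ K₁ xhat C₂ : ℝ)
    (hlam₁ : lam₁ = (-μ - Real.sqrt (μ^2 + 2*β*σ^2)) / σ^2)
    (hlam₂ : lam₂ = (-μ + Real.sqrt (μ^2 + 2*β*σ^2)) / σ^2)
    (hK₁ : K₁ = 1 / (β - μ*a - (1/2)*σ^2*a^2))
    (hxhat : xhat = (1/a) * Real.log (lam₂*c*(β - μ*a - (1/2)*σ^2*a^2) / (lam₂*a - a^2)))
    (hC₂ : C₂ = -(a^2 / (lam₂^2 * (β - μ*a - (1/2)*σ^2*a^2))) * Real.exp ((a - lam₂) * xhat))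
    :
    ∀ κ : ℝ, κ < 0 →
      ∀ x' x'' : ℝ, x' < x'' →
        K₁*a*Real.exp (a*x') + κ*lam₂*Real.exp (lam₂*x') = c →
        K₁*a*Real.exp (a*x'') + κ*lam₂*Real.exp (lam₂*x'') = c →
        x' < xhat ∧ xhat < x'' := by
  intro κ hκ x' x'' hlt h1 h2
  set E : ℝ := β - μ*a - (1/2)*σ^2*a^2 with hEdef
  have hE : 0 < E := by simp only [hEdef]; linarith
  -- basic facts about lam₂
  have hargnn : (0:ℝ) ≤ μ^2 + 2*β*σ^2 := by positivity
  have hs2 : (Real.sqrt (μ^2 + 2*β*σ^2))^2 = μ^2 + 2*β*σ^2 := Real.sq_sqrt hargnn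
  have hspos : 0 < Real.sqrt (μ^2 + 2*β*σ^2) := Real.sqrt_pos.2 (by positivity)
  have hsa : μ + σ^2*a < Real.sqrt (μ^2 + 2*β*σ^2) := by
    rcases le_or_gt (μ + σ^2*a) 0 with h | h
    · exact lt_of_le_of_lt h hspos
    · have key : 0 < σ^2 * (β - (μ*a + (1/2)*σ^2*a^2)) :=
        mul_pos (by positivity) (by linarith)
      have hsq : (μ + σ^2*a)^2 < (Real.sqrt (μ^2 + 2*β*σ^2))^2 := by
        rw [hs2]; nlinarith [key]
      exact lt_of_pow_lt_pow_left₀ 2 hspos.le hsq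
  have hla : a < lam₂ := by
    rw [hlam₂, lt_div_iff₀ (by positivity : (0:ℝ) < σ^2)]
    linarith
  have hl0 : 0 < lam₂ := ha.trans hla
  have hlssub : 0 < lam₂ - a := sub_pos.2 hla
  set θ : ℝ := a / lam₂ with hθdef
  have hθ0 : 0 < θ := div_pos ha hl0
  have hθ1 : θ < 1 := (div_lt_one hl0).2 hla
  have hdenpos : 0 < lam₂*a - a^2 := by
    have := mul_pos ha hlssub
    nlinarith [this]
  -- the value of exp (a * xhat)
  set W : ℝ := lam₂*c*E / (lam₂*a - a^2) with hWdef
  have hW : 0 < W := div_pos (by positivity) hdenpos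
  have hexhat : Real.exp (a * xhat) = W := by
    rw [hxhat]
    have : a * ((1/a) * Real.log (lam₂*c*E / (lam₂*a - a^2))) =
        Real.log (lam₂*c*E / (lam₂*a - a^2)) := by
      field_simp
    rw [this, Real.exp_log hW]
  have hK : 0 < K₁ := by rw [hK₁]; positivity
  have hA : 0 < K₁ * a := mul_pos hK ha
  have hAW : K₁*a*W = lam₂ * c / (lam₂ - a) := by
    rw [hK₁, hWdef]
    field_simp
  -- exponentials
  set p : ℝ := Real.exp (lam₂*x') with hpdef
  set q : ℝ := Real.exp (lam₂*x'') with hqdef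
  have hp : 0 < p := Real.exp_pos _
  have hq : 0 < q := Real.exp_pos _
  have hpq : p < q := Real.exp_lt_exp.2 ((mul_lt_mul_iff_right₀ hl0).2 hlt)
  have hqp0 : 0 < q - p := sub_pos.2 hpq
  set u : ℝ := p ^ θ with hudef
  set v : ℝ := q ^ θ with hvdef
  have hu : 0 < u := Real.rpow_pos_of_pos hp θ
  have hv : 0 < v := Real.rpow_pos_of_pos hq θ
  have hup : Real.exp (a*x') = u := by
    rw [hudef, hpdef, ← Real.exp_mul]
    congr 1
    rw [hθdef]
    field_simp
  have hvq : Real.exp (a*x'') = v := by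
    rw [hvdef, hqdef, ← Real.exp_mul]
    congr 1
    rw [hθdef]
    field_simp
  rw [hup] at h1
  rw [hvq] at h2
  -- Bernoulli inequalities
  have hdivpos : (0:ℝ) < q / p := div_pos hq hp
  have hdiv1 : 1 < q / p := (one_lt_div hp).2 hpq
  have hdivpos' : (0:ℝ) < p / q := div_pos hp hq
  have hdiv1' : p / q < 1 := (div_lt_one hq).2 hpq
  have hB1 : (q/p) ^ θ < 1 + θ * (q/p - 1) := by
    have := rpow_one_add_lt_one_add_mul_self (s := q/p - 1) (by linarith) (by
      intro h; apply absurd (sub_eq_zero.1 h); intro h'; rw [h'] at hdiv1; linarith) hθ0 hθ1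
    simpa using this
  have hB2 : (p/q) ^ θ < 1 + θ * (p/q - 1) := by
    have := rpow_one_add_lt_one_add_mul_self (s := p/q - 1) (by linarith) (by
      intro h; apply absurd (sub_eq_zero.1 h); intro h'; rw [h'] at hdiv1'; linarith) hθ0 hθ1
    simpa using this
  have hv_eq : v = u * (q/p) ^ θ := by
    rw [hudef, hvdef, ← Real.mul_rpow hp.le hdivpos.le, mul_div_cancel₀ _ hp.ne']
  have hu_eq : u = v * (p/q) ^ θ := by
    rw [hudef, hvdef, ← Real.mul_rpow hq.le hdivpos'.le, mul_div_cancel₀ _ hq.ne']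
  have hB1' : v * p < u * p + θ * u * (q - p) := by
    have h3 : v < u * (1 + θ * (q/p - 1)) := by
      rw [hv_eq]; exact mul_lt_mul_of_pos_left hB1 hu
    have h4 := mul_lt_mul_of_pos_right h3 hp
    refine h4.trans_eq ?_
    field_simp
  have hB2' : u * q < v * q + θ * v * (p - q) := by
    have h3 : u < v * (1 + θ * (p/q - 1)) := by
      rw [hu_eq]; exact mul_lt_mul_of_pos_left hB2 hv
    have h4 := mul_lt_mul_of_pos_right h3 hq
    refine h4.trans_eq ?_
    field_simp
  -- difference equation
  have hd : K₁*a*(v - u) = -(κ*lam₂)*(q - p) := by linear_combination h2 - h1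
  have hQ : 0 < -(κ*lam₂) := neg_pos.2 (mul_neg_of_neg_of_pos hκ hl0)
  -- left inequality: K₁*a*u*(1-θ) < c
  have hQp : -(κ*lam₂)*p < θ * (K₁*a*u) := by
    have h3 : K₁*a*((v - u)*p) < K₁*a*(θ*u*(q - p)) :=
      mul_lt_mul_of_pos_left (by linarith) hA
    have e4 : (-(κ*lam₂)*p)*(q - p) = K₁*a*((v - u)*p) := by
      linear_combination (-p) * hd
    have h4 : (-(κ*lam₂)*p)*(q - p) < (θ*(K₁*a*u))*(q - p) := by
      calc (-(κ*lam₂)*p)*(q - p) = K₁*a*((v - u)*p) := e4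
        _ < K₁*a*(θ*u*(q - p)) := h3
        _ = (θ*(K₁*a*u))*(q - p) := by ring
    exact (mul_lt_mul_iff_left₀ hqp0).1 h4
  have h1' : K₁*a*u = c + (-(κ*lam₂)*p) := by linear_combination h1
  have h5 : K₁*a*u*(1 - θ) < c := by
    have heq : K₁*a*u*(1 - θ) = K₁*a*u - θ*(K₁*a*u) := by ring
    rw [heq]
    linarith [hQp, h1']
  -- right inequality: c < K₁*a*v*(1-θ)
  have hQq : θ * (K₁*a*v) < -(κ*lam₂)*q := by
    have h3 : K₁*a*((u - v)*q) < K₁*a*(θ*v*(p - q)) :=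
      mul_lt_mul_of_pos_left (by linarith) hA
    have e6 : K₁*a*((u - v)*q) = -((-(κ*lam₂)*q)*(q - p)) := by
      linear_combination (-q) * hd
    have h4 : (θ*(K₁*a*v))*(q - p) < (-(κ*lam₂)*q)*(q - p) := by
      calc (θ*(K₁*a*v))*(q - p) = -(K₁*a*(θ*v*(p - q))) := by ring
        _ < -(K₁*a*((u - v)*q)) := by linarith [h3]
        _ = (-(κ*lam₂)*q)*(q - p) := by rw [e6]; ring
    exact (mul_lt_mul_iff_left₀ hqp0).1 h4
  have h2' : K₁*a*v = c + (-(κ*lam₂)*q) := by linear_combination h2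
  have h6 : c < K₁*a*v*(1 - θ) := by
    have heq : K₁*a*v*(1 - θ) = K₁*a*v - θ*(K₁*a*v) := by ring
    rw [heq]
    linarith [hQq, h2']
  -- relate to W
  have hθlam : lam₂ * (1 - θ) = lam₂ - a := by
    rw [hθdef]; field_simp
  have hAuW : K₁*a*u < K₁*a*W := by
    rw [hAW, lt_div_iff₀ hlssub]
    have hmul := mul_lt_mul_of_pos_left h5 hl0
    calc K₁*a*u*(lam₂ - a) = lam₂*(K₁*a*u*(1 - θ)) := by rw [← hθlam]; ring
      _ < lam₂*c := hmul
  have hAvW : K₁*a*W < K₁*a*v := by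
    rw [hAW, div_lt_iff₀ hlssub]
    have hmul := mul_lt_mul_of_pos_left h6 hl0
    calc lam₂*c < lam₂*(K₁*a*v*(1 - θ)) := hmul
      _ = K₁*a*v*(lam₂ - a) := by rw [← hθlam]; ring
  have huW : u < W := lt_of_mul_lt_mul_left hAuW hA.le
  have hWv : W < v := lt_of_mul_lt_mul_left hAvW hA.le
  constructor
  · have h7 : Real.exp (a*x') < Real.exp (a*xhat) := by rw [hup, hexhat]; exact huW
    have h8 := Real.exp_lt_exp.1 h7
    exact lt_of_mul_lt_mul_left h8 ha.le
  · have h7 : Real.exp (a*xhat) < Real.exp (a*x'') := by rw [hvq, hexhat]; exact hWv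
    have h8 := Real.exp_lt_exp.1 h7
    exact lt_of_mul_lt_mul_left h8 ha.le
end

section
/- If z ∈ ℝ satisfies K₂(z) < 0 and z is the unique real solution x of the equation K₁·a·e^{a·x} + K₂(z)·λ₂·e^{λ₂·x} = c, then z = x̂. -/
open Real Filter

theorem stmt_14
    (μ σ c a β : ℝ)
    (hσ : σ > 0) (hc : c > 0) (ha : a > 0) (hβ : β > 0)
    (hβ' : β > μ * a + (1/2) * σ^2 * a^2)
    (lam₁ lam₂ K₁ xhat C₂ : ℝ)
    (hlam₁ : lam₁ = (-μ - Real.sqrt (μ^2 + 2*β*σ^2)) / σ^2)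
    (hlam₂ : lam₂ = (-μ + Real.sqrt (μ^2 + 2*β*σ^2)) / σ^2)
    (hK₁ : K₁ = 1 / (β - μ*a - (1/2)*σ^2*a^2))
    (hxhat : xhat = (1/a) * Real.log (lam₂*c*(β - μ*a - (1/2)*σ^2*a^2) / (lam₂*a - a^2)))
    (hC₂ : C₂ = -(a^2 / (lam₂^2 * (β - μ*a - (1/2)*σ^2*a^2))) * Real.exp ((a - lam₂) * xhat))
    (K₂ : ℝ → ℝ)
    (hK₂ : ∀ z, K₂ z = (c - K₁*a*Real.exp (a*z)) / (lam₂ * Real.exp (lam₂*z)))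
    :
    ∀ z : ℝ, K₂ z < 0 →
      (K₁*a*Real.exp (a*z) + K₂ z * lam₂ * Real.exp (lam₂*z) = c) →
      (∀ x : ℝ, K₁*a*Real.exp (a*x) + K₂ z * lam₂ * Real.exp (lam₂*x) = c → x = z) →
      z = xhat := by
  intro z hBneg heq huniq
  have hs0 : 0 ≤ Real.sqrt (μ^2 + 2*β*σ^2) := Real.sqrt_nonneg _
  have hs2 : (Real.sqrt (μ^2 + 2*β*σ^2))^2 = μ^2 + 2*β*σ^2 :=
    Real.sq_sqrt (by positivity)
  have hσ2 : (0:ℝ) < σ^2 := by positivity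
  have hD : 0 < β - μ*a - (1/2)*σ^2*a^2 := by linarith
  have hL : a < lam₂ := by
    rw [hlam₂, lt_div_iff₀ hσ2]
    nlinarith [hs0, hs2]
  have hLpos : 0 < lam₂ := lt_trans ha hL
  have hK₁pos : 0 < K₁ := by rw [hK₁]; positivity
  set B := K₂ z with hB
  set G : ℝ → ℝ := fun x => K₁*a*Real.exp (a*x) + B*lam₂*Real.exp (lam₂*x) with hG
  have hGz : G z = c := by
    simpa [hG, mul_assoc] using heq
  have hGuniq : ∀ x : ℝ, G x = c → x = z := by
    intro x hx
    exact huniq x (by simpa [hG, mul_assoc] using hx)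
  have hcont : Continuous G := by
    apply Continuous.add <;> exact (continuous_const.mul ((continuous_const.mul continuous_id).rexp))
  have hderiv : ∀ x : ℝ, HasDerivAt G
      (K₁*a^2*Real.exp (a*x) + B*lam₂^2*Real.exp (lam₂*x)) x := by
    intro x
    have h1 : HasDerivAt (fun y : ℝ => a*y) a x := by
      simpa using (hasDerivAt_id x).const_mul a
    have h2 : HasDerivAt (fun y : ℝ => lam₂*y) lam₂ x := by
      simpa using (hasDerivAt_id x).const_mul lam₂
    have h3 := ((h1.exp).const_mul (K₁*a)).add ((h2.exp).const_mul (B*lam₂))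
    exact h3.congr_deriv (by ring)
  -- the derivative at z must vanish
  have hkey : K₁*a^2*Real.exp (a*z) + B*lam₂^2*Real.exp (lam₂*z) = 0 := by
    by_contra hne
    have hslope := hasDerivAt_iff_tendsto_slope.mp (hderiv z)
    rcases lt_or_gt_of_ne hne with hdneg | hdpos
    · -- derivative negative: G > c just left of z, G → 0 < c at -∞ : second root below z
      have h1 : ∀ᶠ x in nhdsWithin z (Set.Iio z), slope G z x < 0 := by
        refine (hslope.eventually (eventually_lt_nhds hdneg)).filter_mono
          (nhdsWithin_mono z ?_)
        intro x hx; exact ne_of_lt hx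
      obtain ⟨w, hws, hwz⟩ := (h1.and self_mem_nhdsWithin).exists
      have hwz' : w < z := hwz
      have hGw : c < G w := by
        have := hws
        rw [slope_def_field] at this
        have h4 : G w - G z = ((G w - G z)/(w - z)) * (w - z) :=
          (div_mul_cancel₀ _ (sub_ne_zero.mpr (ne_of_lt hwz'))).symm
        have h5 : 0 < G w - G z := by
          rw [h4]
          exact mul_pos_of_neg_of_neg this (by linarith)
        linarith [hGz ▸ h5]
      -- G tends to 0 at -∞
      have hbot : Tendsto G atBot (nhds 0) := by
        have t1 : Tendsto (fun x : ℝ => Real.exp (a*x)) atBot (nhds 0) :=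
          Real.tendsto_exp_atBot.comp (tendsto_id.const_mul_atBot ha)
        have t2 : Tendsto (fun x : ℝ => Real.exp (lam₂*x)) atBot (nhds 0) :=
          Real.tendsto_exp_atBot.comp (tendsto_id.const_mul_atBot hLpos)
        have := (t1.const_mul (K₁*a)).add (t2.const_mul (B*lam₂))
        simpa using this
      obtain ⟨X, hXc, hXw⟩ :=
        ((hbot.eventually (eventually_lt_nhds hc)).and (eventually_lt_atBot w)).exists
      have hIcc : c ∈ Set.Icc (G X) (G w) := ⟨le_of_lt hXc, le_of_lt hGw⟩
      obtain ⟨x, hxmem, hxc⟩ :=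
        intermediate_value_Icc (le_of_lt hXw) hcont.continuousOn hIcc
      have := hGuniq x hxc
      have : x ≤ w := hxmem.2
      linarith [hGuniq x hxc ▸ this]
    · -- derivative positive: G > c just right of z, G → -∞ at +∞ : second root above z
      have h1 : ∀ᶠ x in nhdsWithin z (Set.Ioi z), 0 < slope G z x := by
        refine (hslope.eventually (eventually_gt_nhds hdpos)).filter_mono
          (nhdsWithin_mono z ?_)
        intro x hx; exact ne_of_gt hx
      obtain ⟨w, hws, hwz⟩ := (h1.and self_mem_nhdsWithin).exists
      have hwz' : z < w := hwz
      have hGw : c < G w := by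
        have := hws
        rw [slope_def_field] at this
        have h4 : G w - G z = ((G w - G z)/(w - z)) * (w - z) :=
          (div_mul_cancel₀ _ (sub_ne_zero.mpr (ne_of_gt hwz'))).symm
        have h5 : 0 < G w - G z := by
          rw [h4]
          exact mul_pos this (by linarith)
        linarith [hGz ▸ h5]
      -- G tends to -∞ at +∞
      have hBL : B*lam₂ < 0 := mul_neg_of_neg_of_pos hBneg hLpos
      have htop : Tendsto G atTop atBot := by
        have hGx : ∀ x, G x = Real.exp (lam₂*x) * (K₁*a*Real.exp ((a-lam₂)*x) + B*lam₂) := by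
          intro x
          have e : Real.exp (lam₂*x) * Real.exp ((a-lam₂)*x) = Real.exp (a*x) := by
            rw [← Real.exp_add]; ring_nf
          rw [hG]; simp only []
          rw [← e]; ring
        have t1 : Tendsto (fun x : ℝ => Real.exp (lam₂*x)) atTop atTop :=
          Real.tendsto_exp_atTop.comp (tendsto_id.const_mul_atTop hLpos)
        have t2 : Tendsto (fun x : ℝ => K₁*a*Real.exp ((a-lam₂)*x) + B*lam₂) atTop
            (nhds (B*lam₂)) := by
          have t3 : Tendsto (fun x : ℝ => Real.exp ((a-lam₂)*x)) atTop (nhds 0) :=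
            Real.tendsto_exp_atBot.comp ((tendsto_const_mul_atBot_of_neg (by linarith : a - lam₂ < 0)).mpr tendsto_id)
          simpa using (t3.const_mul (K₁*a)).add (tendsto_const_nhds (x := B*lam₂))
        have := t1.atTop_mul_neg hBL t2
        simpa [← hGx] using this
      obtain ⟨X, hXc, hXw⟩ :=
        ((htop.eventually (eventually_lt_atBot c)).and (eventually_gt_atTop w)).exists
      have hIcc : c ∈ Set.Icc (G X) (G w) := ⟨le_of_lt hXc, le_of_lt hGw⟩
      obtain ⟨x, hxmem, hxc⟩ :=
        intermediate_value_Icc' (le_of_lt hXw) hcont.continuousOn hIcc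
      have : w ≤ x := hxmem.1
      linarith [hGuniq x hxc ▸ this]
  -- now the algebra
  have hden : lam₂*a - a^2 > 0 := by nlinarith
  have hE1 : Real.exp (a*z) = lam₂*c*(β - μ*a - (1/2)*σ^2*a^2) / (lam₂*a - a^2) := by
    have hK₁D : K₁ * (β - μ*a - (1/2)*σ^2*a^2) = 1 := by
      rw [hK₁, one_div, inv_mul_cancel₀ (ne_of_gt hD)]
    rw [eq_div_iff (ne_of_gt hden)]
    linear_combination (lam₂*(β - μ*a - (1/2)*σ^2*a^2))*heq
      - (β - μ*a - (1/2)*σ^2*a^2)*hkey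
      - (a*lam₂*Real.exp (a*z) - a^2*Real.exp (a*z))*hK₁D
  rw [hxhat, ← hE1, Real.log_exp]
  field_simp
end

section
/- For every z ∈ ℝ one has the identity K₁·a²·e^{a·z} + K₂(z)·λ₂²·e^{λ₂·z} = λ₂·c − K₁·a·(λ₂ − a)·e^{a·z}, and this quantity (the second derivative at the boundary z of the value function of the control law with boundary z) is strictly positive if z < x̂, equals zero if z = x̂, and is strictly negative if z > x̂. -/
open Real Filter

theorem stmt_15
    (μ σ c a β : ℝ)
    (hσ : σ > 0) (hc : c > 0) (ha : a > 0) (hβ : β > 0)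
    (hβ' : β > μ * a + (1/2) * σ^2 * a^2)
    (lam₁ lam₂ K₁ xhat C₂ : ℝ)
    (hlam₁ : lam₁ = (-μ - Real.sqrt (μ^2 + 2*β*σ^2)) / σ^2)
    (hlam₂ : lam₂ = (-μ + Real.sqrt (μ^2 + 2*β*σ^2)) / σ^2)
    (hK₁ : K₁ = 1 / (β - μ*a - (1/2)*σ^2*a^2))
    (hxhat : xhat = (1/a) * Real.log (lam₂*c*(β - μ*a - (1/2)*σ^2*a^2) / (lam₂*a - a^2)))
    (hC₂ : C₂ = -(a^2 / (lam₂^2 * (β - μ*a - (1/2)*σ^2*a^2))) * Real.exp ((a - lam₂) * xhat))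
    (K₂ : ℝ → ℝ)
    (hK₂ : ∀ z, K₂ z = (c - K₁*a*Real.exp (a*z)) / (lam₂ * Real.exp (lam₂*z)))
    :
    ∀ z : ℝ,
      (K₁*a^2*Real.exp (a*z) + K₂ z * lam₂^2 * Real.exp (lam₂*z)
        = lam₂*c - K₁*a*(lam₂ - a)*Real.exp (a*z)) ∧
      (z < xhat → K₁*a^2*Real.exp (a*z) + K₂ z * lam₂^2 * Real.exp (lam₂*z) > 0) ∧
      (z = xhat → K₁*a^2*Real.exp (a*z) + K₂ z * lam₂^2 * Real.exp (lam₂*z) = 0) ∧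
      (z > xhat → K₁*a^2*Real.exp (a*z) + K₂ z * lam₂^2 * Real.exp (lam₂*z) < 0) := by
  have hσ2 : (0:ℝ) < σ^2 := by positivity
  have hD : 0 < β - μ*a - (1/2)*σ^2*a^2 := by linarith
  have hs : μ + σ^2*a < Real.sqrt (μ^2 + 2*β*σ^2) := by
    rcases le_or_gt 0 (μ + σ^2*a) with h | h
    · rw [Real.lt_sqrt h]
      nlinarith
    · exact lt_of_lt_of_le h (Real.sqrt_nonneg _)
  have hla : a < lam₂ := by
    rw [hlam₂, lt_div_iff₀ hσ2]
    nlinarith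
  have hl2 : 0 < lam₂ := lt_trans ha hla
  have hden : 0 < lam₂*a - a^2 := by nlinarith
  have hR : 0 < lam₂*c*(β - μ*a - (1/2)*σ^2*a^2) / (lam₂*a - a^2) := by
    apply div_pos _ hden; positivity
  have hexp : Real.exp (a*xhat) = lam₂*c*(β - μ*a - (1/2)*σ^2*a^2) / (lam₂*a - a^2) := by
    rw [hxhat, show a * ((1/a) * Real.log (lam₂*c*(β - μ*a - (1/2)*σ^2*a^2) / (lam₂*a - a^2)))
      = Real.log (lam₂*c*(β - μ*a - (1/2)*σ^2*a^2) / (lam₂*a - a^2)) by field_simp]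
    exact Real.exp_log hR
  have hK₁pos : 0 < K₁ := by rw [hK₁]; positivity
  have hcoef : 0 < K₁*a*(lam₂ - a) := by
    apply mul_pos (mul_pos hK₁pos ha); linarith
  have hkey : K₁*a*(lam₂-a) * Real.exp (a*xhat) = lam₂*c := by
    rw [hexp, hK₁, ← mul_div_assoc, div_eq_iff hden.ne', one_div]
    have h := mul_inv_cancel₀ hD.ne'
    linear_combination (a*(lam₂-a)*(lam₂*c)) * h
  intro z
  have hne : lam₂ * Real.exp (lam₂*z) ≠ 0 := by positivity
  have hid : K₁*a^2*Real.exp (a*z) + K₂ z * lam₂^2 * Real.exp (lam₂*z)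
      = lam₂*c - K₁*a*(lam₂ - a)*Real.exp (a*z) := by
    rw [hK₂ z]
    field_simp
    ring
  refine ⟨hid, ?_, ?_, ?_⟩
  · intro hz
    rw [hid]
    have : Real.exp (a*z) < Real.exp (a*xhat) := by
      apply Real.exp_lt_exp.mpr
      exact mul_lt_mul_of_pos_left hz ha
    have h1 := mul_lt_mul_of_pos_left this hcoef
    rw [hkey] at h1
    linarith
  · intro hz
    rw [hid, hz]
    linarith [hkey]
  · intro hz
    rw [hid]
    have : Real.exp (a*xhat) < Real.exp (a*z) := by
      apply Real.exp_lt_exp.mpr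
      exact mul_lt_mul_of_pos_left hz ha
    have h1 := mul_lt_mul_of_pos_left this hcoef
    rw [hkey] at h1
    linarith
end

section
/- If z < x̂ then e^{a·x̂} − β·( c·(x̂ − z) + K₁·e^{a·z} + K₂(z)·e^{λ₂·z} ) + μ·c < 0; that is, the first-order q-function of the singular control law with boundary z is strictly negative at the optimal boundary point x̂ whenever z < x̂. -/
open Real Filter

set_option maxHeartbeats 2000000 in
theorem stmt_16
    (μ σ c a β : ℝ)
    (hσ : σ > 0) (hc : c > 0) (ha : a > 0) (hβ : β > 0)
    (hβ' : β > μ * a + (1/2) * σ^2 * a^2)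
    (lam₁ lam₂ K₁ xhat C₂ : ℝ)
    (hlam₁ : lam₁ = (-μ - Real.sqrt (μ^2 + 2*β*σ^2)) / σ^2)
    (hlam₂ : lam₂ = (-μ + Real.sqrt (μ^2 + 2*β*σ^2)) / σ^2)
    (hK₁ : K₁ = 1 / (β - μ*a - (1/2)*σ^2*a^2))
    (hxhat : xhat = (1/a) * Real.log (lam₂*c*(β - μ*a - (1/2)*σ^2*a^2) / (lam₂*a - a^2)))
    (hC₂ : C₂ = -(a^2 / (lam₂^2 * (β - μ*a - (1/2)*σ^2*a^2))) * Real.exp ((a - lam₂) * xhat))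
    (K₂ : ℝ → ℝ)
    (hK₂ : ∀ z, K₂ z = (c - K₁*a*Real.exp (a*z)) / (lam₂ * Real.exp (lam₂*z)))
    :
    ∀ z : ℝ, z < xhat →
      Real.exp (a*xhat) - β * (c*(xhat - z) + K₁*Real.exp (a*z) + K₂ z * Real.exp (lam₂*z)) + μ*c < 0 := by
  intro z hz
  have hσ2 : (0:ℝ) < σ^2 := by positivity
  have hD : (0:ℝ) < β - μ*a - (1/2)*σ^2*a^2 := by linarith
  have hsnn : 0 ≤ Real.sqrt (μ^2 + 2*β*σ^2) := Real.sqrt_nonneg _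
  have hs2 : Real.sqrt (μ^2 + 2*β*σ^2) ^ 2 = μ^2 + 2*β*σ^2 := Real.sq_sqrt (by positivity)
  have hμs : μ + Real.sqrt (μ^2 + 2*β*σ^2) > 0 := by nlinarith [hs2, hsnn]
  have hlam₂pos : 0 < lam₂ := by
    rw [hlam₂]
    have : -μ + Real.sqrt (μ^2 + 2*β*σ^2) > 0 := by nlinarith [hs2, hsnn]
    positivity
  have hquad : σ^2/2 * lam₂^2 + μ * lam₂ = β := by
    rw [hlam₂]; generalize Real.sqrt (μ^2 + 2*β*σ^2) = S at hs2 ⊢; field_simp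
    linear_combination hs2
  have hfac : μ + σ^2/2 * lam₂ > 0 := by
    rw [hlam₂]; generalize Real.sqrt (μ^2 + 2*β*σ^2) = S at hμs ⊢; field_simp; nlinarith [hμs]
  have hgt : a < lam₂ := by
    by_contra h; push_neg at h
    have h1 : 0 < μ + σ^2/2*(lam₂+a) := by nlinarith
    have h2 : (a - lam₂) * (μ + σ^2/2*(lam₂+a)) ≥ 0 := mul_nonneg (by linarith) h1.le
    have h3 : (a - lam₂) * (μ + σ^2/2*(lam₂+a)) = μ*a + (1/2)*σ^2*a^2 - β := by
      linear_combination (-1) * hquad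
    linarith
  have hane : a ≠ 0 := ne_of_gt ha
  have hlamne : lam₂ ≠ 0 := ne_of_gt hlam₂pos
  have harg : 0 < lam₂*c*(β - μ*a - (1/2)*σ^2*a^2) / (lam₂*a - a^2) := by
    have h1 : 0 < lam₂*a - a^2 := by nlinarith
    have h2 : 0 < lam₂*c*(β - μ*a - (1/2)*σ^2*a^2) := by positivity
    positivity
  have hE : Real.exp (a*xhat) = lam₂*c*(β - μ*a - (1/2)*σ^2*a^2) / (lam₂*a - a^2) := by
    rw [hxhat, show a * ((1/a) * Real.log (lam₂*c*(β - μ*a - (1/2)*σ^2*a^2) / (lam₂*a - a^2)))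
        = Real.log (lam₂*c*(β - μ*a - (1/2)*σ^2*a^2) / (lam₂*a - a^2)) by field_simp]
    exact Real.exp_log harg
  have hK2 : K₂ z * Real.exp (lam₂*z) = (c - K₁*a*Real.exp (a*z)) / lam₂ := by
    rw [hK₂ z]
    field_simp [Real.exp_ne_zero]
  have hsplit : Real.exp (a*z) = Real.exp (a*(z-xhat)) * Real.exp (a*xhat) := by
    rw [← Real.exp_add]; ring_nf
  have hDne : (β - μ*a - (1/2)*σ^2*a^2) ≠ 0 := ne_of_gt hD
  have hdenne : lam₂*a - a^2 ≠ 0 := by nlinarith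
  -- Fact1 : coefficient identity (division-free)
  have fact1 : β * (lam₂ - a) * Real.exp (a*xhat) * a = β*c*((β - μ*a - (1/2)*σ^2*a^2) * lam₂) := by
    rw [hE]; field_simp [hdenne, sub_ne_zero.mpr (ne_of_gt hgt)]
  -- Fact2 : value at xhat is zero (division-free)
  have fact2 : (Real.exp (a*xhat) + μ*c) * a * lam₂ = β*c*lam₂ + β*c*a := by
    rw [hE]; field_simp [hdenne, sub_ne_zero.mpr (ne_of_gt hgt)]
    linear_combination (-(2*a^2)) * hquad
  have hDne2 : β*2 - μ*a*2 - a^2*σ^2 ≠ 0 := by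
    have : 0 < β*2 - μ*a*2 - a^2*σ^2 := by nlinarith [hD]
    exact ne_of_gt this
  have hK₁D : K₁ * (β - μ*a - (1/2)*σ^2*a^2) = 1 := by
    rw [hK₁]; exact one_div_mul_cancel hDne
  have fact1' : β * (K₁*lam₂ - K₁*a) * Real.exp (a*xhat) * a = β*c*lam₂ := by
    linear_combination K₁ * fact1 + (β*c*lam₂) * hK₁D
  have hmain : Real.exp (a*xhat) - β * (c*(xhat - z) + K₁*Real.exp (a*z) + K₂ z * Real.exp (lam₂*z)) + μ*c
      = (β*c/a) * (1 + a*(z-xhat) - Real.exp (a*(z-xhat))) := by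
    rw [hK2, hsplit]
    field_simp [hane, hlamne, hDne2]
    linear_combination fact2 - (Real.exp (a*(z-xhat))) * fact1'
  rw [hmain]
  have ht : a*(z-xhat) ≠ 0 := by
    have : a*(z-xhat) < 0 := by nlinarith
    linarith
  have hexp : a*(z-xhat) + 1 < Real.exp (a*(z-xhat)) := Real.add_one_lt_exp ht
  have hpos : 0 < β*c/a := by positivity
  nlinarith [hpos, hexp]
end

section
/- If z > x̂ then for every x ≥ z one has e^{a·x} − β·( c·(x − z) + K₁·e^{a·z} + K₂(z)·e^{λ₂·z} ) + μ·c > 0; that is, the first-order q-function of the singular control law with boundary z is strictly positive on the action region [z, ∞) whenever z > x̂. -/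
open Real Filter

set_option maxHeartbeats 2000000 in
theorem stmt_17
    (μ σ c a β : ℝ)
    (hσ : σ > 0) (hc : c > 0) (ha : a > 0) (hβ : β > 0)
    (hβ' : β > μ * a + (1/2) * σ^2 * a^2)
    (lam₁ lam₂ K₁ xhat C₂ : ℝ)
    (hlam₁ : lam₁ = (-μ - Real.sqrt (μ^2 + 2*β*σ^2)) / σ^2)
    (hlam₂ : lam₂ = (-μ + Real.sqrt (μ^2 + 2*β*σ^2)) / σ^2)
    (hK₁ : K₁ = 1 / (β - μ*a - (1/2)*σ^2*a^2))
    (hxhat : xhat = (1/a) * Real.log (lam₂*c*(β - μ*a - (1/2)*σ^2*a^2) / (lam₂*a - a^2)))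
    (hC₂ : C₂ = -(a^2 / (lam₂^2 * (β - μ*a - (1/2)*σ^2*a^2))) * Real.exp ((a - lam₂) * xhat))
    (K₂ : ℝ → ℝ)
    (hK₂ : ∀ z, K₂ z = (c - K₁*a*Real.exp (a*z)) / (lam₂ * Real.exp (lam₂*z)))
    :
    ∀ z : ℝ, z > xhat →
      ∀ x : ℝ, x ≥ z →
        Real.exp (a*x) - β * (c*(x - z) + K₁*Real.exp (a*z) + K₂ z * Real.exp (lam₂*z)) + μ*c > 0 := by
  have hD : β - μ*a - (1/2)*σ^2*a^2 > 0 := by linarith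
  have hDne : β - μ*a - (1/2)*σ^2*a^2 ≠ 0 := ne_of_gt hD
  have hσ2 : σ^2 > 0 := by positivity
  have hs2 : Real.sqrt (μ^2 + 2*β*σ^2) ^ 2 = μ^2 + 2*β*σ^2 := Real.sq_sqrt (by positivity)
  have hsnn : 0 ≤ Real.sqrt (μ^2 + 2*β*σ^2) := Real.sqrt_nonneg _
  have hquad : (σ^2/2)*lam₂^2 + μ*lam₂ = β := by
    rw [hlam₂]; generalize Real.sqrt (μ^2 + 2*β*σ^2) = s at hs2 ⊢; field_simp; nlinarith [hs2]
  have hsgtmu : Real.sqrt (μ^2 + 2*β*σ^2) > μ := by nlinarith [hs2, hsnn]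
  have hlam2pos : lam₂ > 0 := by
    rw [hlam₂]; apply div_pos (by linarith) hσ2
  have hlam2ne : lam₂ ≠ 0 := ne_of_gt hlam2pos
  have hfac : (σ^2/2)*lam₂ + μ > 0 := by nlinarith [hquad, hlam2pos]
  have hfac2 : (σ^2/2)*(lam₂+a) + μ > 0 := by nlinarith [hfac, mul_pos hσ2 ha]
  have hlam2a : lam₂ > a := by
    by_contra h
    push_neg at h
    nlinarith [mul_nonneg (sub_nonneg.2 h) hfac2.le, hquad, hβ']
  have hden : lam₂*a - a^2 > 0 := by nlinarith [hlam2a, ha]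
  have harg : lam₂*c*(β - μ*a - (1/2)*σ^2*a^2) / (lam₂*a - a^2) > 0 := by
    apply div_pos (by positivity) hden
  have hexpxhat : Real.exp (a*xhat) = lam₂*c*(β - μ*a - (1/2)*σ^2*a^2) / (lam₂*a - a^2) := by
    have h1 : a * xhat = Real.log (lam₂*c*(β - μ*a - (1/2)*σ^2*a^2) / (lam₂*a - a^2)) := by
      rw [hxhat]; field_simp
    rw [h1, Real.exp_log harg]
  -- gap : lam₂ * D > β * (lam₂ - a)
  have hgapEq : lam₂*(β - μ*a - (1/2)*σ^2*a^2) - β*(lam₂ - a) = (σ^2/2)*a*lam₂*(lam₂ - a) := by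
    linear_combination (-a) * hquad
  have hgap : lam₂*(β - μ*a - (1/2)*σ^2*a^2) > β*(lam₂ - a) := by
    have : (σ^2/2)*a*lam₂*(lam₂ - a) > 0 :=
      mul_pos (mul_pos (mul_pos (by positivity) ha) hlam2pos) (sub_pos.2 hlam2a)
    linarith
  intro z hz x hx
  set B := Real.exp (a*z) with hB
  have hBpos : B > 0 := Real.exp_pos _
  have hexpz : B > lam₂*c*(β - μ*a - (1/2)*σ^2*a^2) / (lam₂*a - a^2) := by
    rw [hB, ← hexpxhat]
    exact Real.exp_lt_exp.2 (by nlinarith [hz, ha])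
  have h1 : B * (lam₂*a - a^2) > lam₂*c*(β - μ*a - (1/2)*σ^2*a^2) := by
    rw [gt_iff_lt, ← div_lt_iff₀ hden]; exact hexpz
  -- B * a > β * c
  have h2 : B * a > β * c := by
    have h3 : c * (lam₂*(β - μ*a - (1/2)*σ^2*a^2)) > c * (β*(lam₂ - a)) :=
      mul_lt_mul_of_pos_left hgap hc
    nlinarith [h1, h3, hlam2a]
  -- K₂ term simplification
  have hK2z : K₂ z * Real.exp (lam₂*z) = (c - K₁*a*B) / lam₂ := by
    rw [hK₂ z, ← hB]
    field_simp [Real.exp_ne_zero]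
  -- bracket positivity
  have hE1 : B - β*(K₁*B + (c - K₁*a*B)/lam₂) + μ*c > 0 := by
    have heq : (B - β*(K₁*B + (c - K₁*a*B)/lam₂) + μ*c) * (lam₂*(β - μ*a - (1/2)*σ^2*a^2))
        = (σ^2/2)*lam₂*(B*(lam₂*a - a^2) - c*lam₂*(β - μ*a - (1/2)*σ^2*a^2)) := by
      have hq2 : (σ^2/2)*lam₂^2 + μ*lam₂ - β = 0 := by linarith [hquad]
      have hK1D : K₁ * (β - μ*a - (1/2)*σ^2*a^2) = 1 := by
        rw [hK₁]; exact one_div_mul_cancel hDne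
      have hW : ((c - K₁*a*B)/lam₂) * lam₂ = c - K₁*a*B := div_mul_cancel₀ _ hlam2ne
      linear_combination (-(β*(β - μ*a - (1/2)*σ^2*a^2))) * hW + (β*a*B - β*B*lam₂) * hK1D + (c*(β - μ*a - (1/2)*σ^2*a^2) - a*B) * hq2
    have hrhs : (σ^2/2)*lam₂*(B*(lam₂*a - a^2) - c*lam₂*(β - μ*a - (1/2)*σ^2*a^2)) > 0 := by
      apply mul_pos (by positivity)
      linarith [h1]
    have hP : lam₂*(β - μ*a - (1/2)*σ^2*a^2) > 0 := mul_pos hlam2pos hD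
    nlinarith [heq, hrhs, hP]
  -- growth part
  have hgrow : Real.exp (a*x) - B ≥ β*c*(x - z) := by
    have he : Real.exp (a*x) = B * Real.exp (a*(x-z)) := by
      rw [hB, ← Real.exp_add]; ring_nf
    have hle : a*(x-z) + 1 ≤ Real.exp (a*(x-z)) := Real.add_one_le_exp _
    have hxz : x - z ≥ 0 := by linarith
    have : B * (a*(x-z) + 1) ≤ B * Real.exp (a*(x-z)) := by
      exact mul_le_mul_of_nonneg_left hle (le_of_lt hBpos)
    have hba : β*c*(x-z) ≤ B*a*(x-z) := mul_le_mul_of_nonneg_right (le_of_lt h2) hxz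
    rw [he]; nlinarith [this, hba]
  rw [hK2z]
  nlinarith [hE1, hgrow]
end

section
/- For every z ∈ ℝ there exists a unique w ∈ ℝ such that the interior of the set { x ∈ ℝ : q₀(x; z) ≥ 0 and q₁(x; z) ≤ 0 } equals the open lower ray (−∞, w). Moreover w > x̂ if z < x̂, w < x̂ if z > x̂, and w = x̂ if z = x̂; in other words, one step of the policy improvement iteration always produces a waiting region that is a lower ray whose boundary lies on the opposite side of x̂ (or equals x̂ at the fixed point). -/
open Real Filter

lemma aux_exp_ratio (a L t : ℝ) (ha : 0 < a) (hL : a < L) (ht : t ≠ 0) :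
    L * (Real.exp (a*t) - 1) < a * (Real.exp (L*t) - 1) := by
  have h0L : (0:ℝ) < L := lt_trans ha hL
  have hne : L*t ≠ 0 := mul_ne_zero (ne_of_gt h0L) ht
  have hb : (0:ℝ) < a/L := by positivity
  have hb' : (0:ℝ) < 1 - a/L := by
    have : a/L < 1 := (div_lt_one h0L).mpr hL
    linarith
  have hc := strictConvexOn_exp.2 (Set.mem_univ (L*t)) (Set.mem_univ (0:ℝ)) hne hb hb' (by ring)
  simp only [smul_eq_mul, mul_zero, add_zero, Real.exp_zero, mul_one] at hc
  have hat : a/L * (L*t) = a*t := by field_simp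
  rw [hat] at hc
  have := mul_lt_mul_of_pos_left hc h0L
  have hLne : L ≠ 0 := ne_of_gt h0L
  calc L * (Real.exp (a*t) - 1) = L * Real.exp (a*t) - L := by ring
    _ < L * (a/L * Real.exp (L*t) + (1 - a/L)) - L := by linarith
    _ = a * (Real.exp (L*t) - 1) := by field_simp; ring

lemma iio_inj {w w' : ℝ} (h : Set.Iio w' = Set.Iio w) : w' = w := by
  have h1 := Set.ext_iff.mp h
  rcases lt_trichotomy w' w with hlt | he | hgt
  · exact absurd ((h1 w').mpr hlt) (lt_irrefl w')
  · exact he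
  · exact absurd ((h1 w).mp hgt) (lt_irrefl w)

set_option maxHeartbeats 1000000 in
theorem stmt_18
    (μ σ c a β : ℝ)
    (hσ : σ > 0) (hc : c > 0) (ha : a > 0) (hβ : β > 0)
    (hβ' : β > μ * a + (1/2) * σ^2 * a^2)
    (lam₁ lam₂ K₁ xhat C₂ : ℝ)
    (hlam₁ : lam₁ = (-μ - Real.sqrt (μ^2 + 2*β*σ^2)) / σ^2)
    (hlam₂ : lam₂ = (-μ + Real.sqrt (μ^2 + 2*β*σ^2)) / σ^2)
    (hK₁ : K₁ = 1 / (β - μ*a - (1/2)*σ^2*a^2))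
    (hxhat : xhat = (1/a) * Real.log (lam₂*c*(β - μ*a - (1/2)*σ^2*a^2) / (lam₂*a - a^2)))
    (hC₂ : C₂ = -(a^2 / (lam₂^2 * (β - μ*a - (1/2)*σ^2*a^2))) * Real.exp ((a - lam₂) * xhat))
    (K₂ : ℝ → ℝ)
    (hK₂ : ∀ z, K₂ z = (c - K₁*a*Real.exp (a*z)) / (lam₂ * Real.exp (lam₂*z)))
    (q₀ q₁ : ℝ → ℝ → ℝ)
    (hq₀ : ∀ x z, q₀ x z = if x < z then c - (K₁*a*Real.exp (a*x) + K₂ z * lam₂ * Real.exp (lam₂*x)) else 0)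
    (hq₁ : ∀ x z, q₁ x z = if x < z then 0
      else Real.exp (a*x) - β * (c*(x - z) + K₁*Real.exp (a*z) + K₂ z * Real.exp (lam₂*z)) + μ*c)
    :
    ∀ z : ℝ, ∃ w : ℝ,
      (interior {x : ℝ | q₀ x z ≥ 0 ∧ q₁ x z ≤ 0} = Set.Iio w) ∧
      (∀ w' : ℝ, interior {x : ℝ | q₀ x z ≥ 0 ∧ q₁ x z ≤ 0} = Set.Iio w' → w' = w) ∧
      (z < xhat → w > xhat) ∧ (z > xhat → w < xhat) ∧ (z = xhat → w = xhat) := by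
  intro z
  have hσ2 : (0:ℝ) < σ^2 := by positivity
  obtain ⟨D, hDdef⟩ : ∃ x : ℝ, x = β - μ*a - (1/2)*σ^2*a^2 := ⟨_, rfl⟩
  rw [← hDdef] at hK₁ hxhat hC₂
  have hD : 0 < D := by rw [hDdef]; linarith
  obtain ⟨s, hsdef⟩ : ∃ x : ℝ, x = Real.sqrt (μ^2 + 2*β*σ^2) := ⟨_, rfl⟩
  rw [← hsdef] at hlam₁ hlam₂
  have hs2 : s^2 = μ^2 + 2*β*σ^2 := by rw [hsdef]; exact Real.sq_sqrt (by positivity)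
  have hs0 : 0 < s := by rw [hsdef]; exact Real.sqrt_pos.mpr (by positivity)
  have hla : a < lam₂ := by
    rw [hlam₂, lt_div_iff₀ hσ2]
    nlinarith [hs2, hs0, sq_nonneg (s - (μ + σ^2*a))]
  have hl0 : 0 < lam₂ := lt_trans ha hla
  have hchar : σ^2 * lam₂^2 + 2*μ*lam₂ = 2*β := by
    have h1 : lam₂*σ^2 = -μ + s := by rw [hlam₂]; field_simp
    have h2 : σ^2*(σ^2*lam₂^2 + 2*μ*lam₂) = σ^2*(2*β) := by
      linear_combination (lam₂*σ^2 + μ + s) * h1 + hs2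
    exact mul_left_cancel₀ (ne_of_gt hσ2) h2
  obtain ⟨E, hEdef⟩ : ∃ x : ℝ, x = Real.exp (a*xhat) := ⟨_, rfl⟩
  have hE0 : 0 < E := by rw [hEdef]; positivity
  have hargpos : 0 < lam₂*c*D/(lam₂*a - a^2) := by
    apply div_pos (by positivity)
    nlinarith
  have hE : E = lam₂*c*D/(lam₂*a - a^2) := by
    rw [hEdef, hxhat]
    rw [show a * ((1/a) * Real.log (lam₂*c*D/(lam₂*a - a^2))) = Real.log (lam₂*c*D/(lam₂*a - a^2)) by
      field_simp]
    exact Real.exp_log hargpos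
  have hane : lam₂*a - a^2 ≠ 0 := by nlinarith
  have hkey : a*(lam₂ - a)*E = c*lam₂*D := by
    rw [hE, mul_div_assoc', div_eq_iff hane]
    ring
  have hβcE : a*E = β*c + c*a*σ^2*lam₂/2 := by
    have hne : lam₂ - a ≠ 0 := ne_of_gt (by linarith)
    have h2 : (a*E)*(lam₂ - a) = (β*c + c*a*σ^2*lam₂/2)*(lam₂-a) := by
      linear_combination hkey + c*lam₂*hDdef - (c*a/2)*hchar
    exact mul_right_cancel₀ hne h2
  have hK₁D : K₁ * D = 1 := by rw [hK₁]; field_simp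
  have hK₁pos : 0 < K₁ := by
    rw [hK₁]; positivity
  -- K₂ identity
  have hK₂z : K₂ z * lam₂ * Real.exp (lam₂*z) = c - K₁*a*Real.exp (a*z) := by
    rw [hK₂]
    have h1 : lam₂ * Real.exp (lam₂*z) ≠ 0 := by positivity
    field_simp
  -- local functions
  obtain ⟨G, hGdef⟩ : ∃ G : ℝ → ℝ, G = fun x => c - (K₁*a*Real.exp (a*x) + K₂ z * lam₂ * Real.exp (lam₂*x)) := ⟨_, rfl⟩
  obtain ⟨F, hFdef⟩ : ∃ F : ℝ → ℝ, F = fun x => Real.exp (a*x) - β * (c*(x - z) + K₁*Real.exp (a*z) + K₂ z * Real.exp (lam₂*z)) + μ*c := ⟨_, rfl⟩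
  have hGx : ∀ x, G x = c - (K₁*a*Real.exp (a*x) + K₂ z * lam₂ * Real.exp (lam₂*x)) := fun x => by rw [hGdef]
  have hFx : ∀ x, F x = Real.exp (a*x) - β * (c*(x - z) + K₁*Real.exp (a*z) + K₂ z * Real.exp (lam₂*z)) + μ*c := fun x => by rw [hFdef]
  have hq₀lt : ∀ x, x < z → q₀ x z = G x := fun x hx => by rw [hq₀, if_pos hx, hGx]
  have hq₀ge : ∀ x, ¬ x < z → q₀ x z = 0 := fun x hx => by rw [hq₀, if_neg hx]
  have hq₁lt : ∀ x, x < z → q₁ x z = 0 := fun x hx => by rw [hq₁, if_pos hx]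
  have hq₁ge : ∀ x, ¬ x < z → q₁ x z = F x := fun x hx => by rw [hq₁, if_neg hx, hFx]
  have hGz : G z = 0 := by rw [hGx]; linear_combination (-1 : ℝ)*hK₂z
  have hFdiff : ∀ x, F x = F z + (Real.exp (a*x) - Real.exp (a*z)) - β*c*(x - z) := by
    intro x; rw [hFx, hFx]; ring
  have hFz2 : lam₂*(2*D*(F z)) = lam₂*(σ^2*a*(lam₂-a)*(Real.exp (a*z) - E)) := by
    rw [hFx]
    linear_combination (-2*D*β)*hK₂z + (2*β*a*Real.exp (a*z) - 2*lam₂*β*Real.exp (a*z))*hK₁D + (2*lam₂*Real.exp (a*z) + 2*lam₂*μ*c - 2*β*c + σ^2*c*lam₂^2)*hDdef + (c*(β - μ*a - σ^2*a^2/2) - a*Real.exp (a*z))*hchar + (σ^2*lam₂)*hkey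
  have hFz : 2*D*(F z) = σ^2*a*(lam₂-a)*(Real.exp (a*z) - E) := mul_left_cancel₀ (ne_of_gt hl0) hFz2
  -- positivity of G for z ≤ xhat
  have hGpos : z ≤ xhat → ∀ x, x < z → 0 < G x := by
    intro hz x hx
    have ht : x - z ≠ 0 := ne_of_lt (by linarith)
    have hAx := aux_exp_ratio a lam₂ (x-z) ha hla ht
    have hxz : x - z < 0 := by linarith
    have hu1 : Real.exp (a*(x-z)) < 1 := Real.exp_lt_one_iff.mpr (mul_neg_of_pos_of_neg ha hxz)
    have hv1 : Real.exp (lam₂*(x-z)) < 1 := Real.exp_lt_one_iff.mpr (mul_neg_of_pos_of_neg hl0 hxz)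
    have huv : Real.exp (lam₂*(x-z)) < Real.exp (a*(x-z)) := Real.exp_lt_exp.mpr (mul_lt_mul_of_neg_right hla hxz)
    have hu0 : 0 < Real.exp (a*(x-z)) := Real.exp_pos _
    have hv0 : 0 < Real.exp (lam₂*(x-z)) := Real.exp_pos _
    have hexpa : Real.exp (a*x) = Real.exp (a*z) * Real.exp (a*(x-z)) := by
      rw [← Real.exp_add]; ring_nf
    have hexpl : Real.exp (lam₂*x) = Real.exp (lam₂*z) * Real.exp (lam₂*(x-z)) := by
      rw [← Real.exp_add]; ring_nf
    have hGxval : G x = c*(1 - Real.exp (lam₂*(x-z))) - (K₁*a*Real.exp (a*z))*(Real.exp (a*(x-z)) - Real.exp (lam₂*(x-z))) := by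
      rw [hGx, hexpa, hexpl]
      linear_combination (-(Real.exp (lam₂*(x-z))))*hK₂z
    have hAE : Real.exp (a*z) ≤ E := by
      rw [hEdef]; exact Real.exp_le_exp.mpr (mul_le_mul_of_nonneg_left hz ha.le)
    have hW : (K₁*a*Real.exp (a*z))*(lam₂ - a) ≤ c*lam₂ := by
      have h1 : (K₁*a*Real.exp (a*z))*(lam₂-a)*D ≤ c*lam₂*D := by
        calc (K₁*a*Real.exp (a*z))*(lam₂-a)*D = a*(lam₂-a)*Real.exp (a*z) := by
              linear_combination (a*Real.exp (a*z)*(lam₂-a))*hK₁D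
          _ ≤ a*(lam₂-a)*E := mul_le_mul_of_nonneg_left hAE (mul_nonneg ha.le (sub_nonneg.mpr hla.le))
          _ = c*lam₂*D := hkey
      exact le_of_mul_le_mul_right h1 hD
    have hWpos : 0 < K₁*a*Real.exp (a*z) := by positivity
    rw [hGxval]
    have h1 : (K₁*a*Real.exp (a*z))*(lam₂-a)*(Real.exp (a*(x-z)) - Real.exp (lam₂*(x-z))) ≤ c*lam₂*(Real.exp (a*(x-z)) - Real.exp (lam₂*(x-z))) :=
      mul_le_mul_of_nonneg_right hW (by linarith)
    have h2 : c*(lam₂ * (Real.exp (a*(x-z)) - 1)) < c*(a * (Real.exp (lam₂*(x-z)) - 1)) :=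
      mul_lt_mul_of_pos_left hAx hc
    have key : 0 < (lam₂ - a) * (c*(1 - Real.exp (lam₂*(x-z))) - (K₁*a*Real.exp (a*z))*(Real.exp (a*(x-z)) - Real.exp (lam₂*(x-z)))) := by
      linarith only [h1, h2]
    rcases mul_pos_iff.mp key with ⟨_, h⟩ | ⟨h, _⟩
    · exact h
    · linarith
  -- continuity and derivatives
  have hGcont : Continuous G := by
    rw [hGdef]; fun_prop
  have hFcont : Continuous F := by
    rw [hFdef]; fun_prop
  have hda : ∀ x : ℝ, HasDerivAt (fun y => Real.exp (a*y)) (Real.exp (a*x) * (a*1)) x :=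
    fun x => ((hasDerivAt_id x).const_mul a).exp
  have hdl : ∀ x : ℝ, HasDerivAt (fun y => Real.exp (lam₂*y)) (Real.exp (lam₂*x) * (lam₂*1)) x :=
    fun x => ((hasDerivAt_id x).const_mul lam₂).exp
  have hGd : ∀ x, HasDerivAt G (-(K₁*a*a*Real.exp (a*x)) - K₂ z*lam₂*lam₂*Real.exp (lam₂*x)) x := by
    intro x
    rw [hGdef]
    have h := (hasDerivAt_const x c).sub (((hda x).const_mul (K₁*a)).add ((hdl x).const_mul (K₂ z*lam₂)))
    exact h.congr_deriv (by ring)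
  have hFd : ∀ x, HasDerivAt F (a*Real.exp (a*x) - β*c) x := by
    intro x
    rw [hFdef]
    have hinner : HasDerivAt (fun y => c*(y - z) + K₁*Real.exp (a*z) + K₂ z*Real.exp (lam₂*z)) (c*1) x :=
      ((((hasDerivAt_id x).sub_const z).const_mul c).add_const (K₁*Real.exp (a*z))).add_const (K₂ z*Real.exp (lam₂*z))
    have h := ((hda x).sub (hinner.const_mul β)).add_const (μ*c)
    exact h.congr_deriv (by ring)
  have haEβc : 0 < a*E - β*c := by
    have h5 : 0 < c*a*σ^2*lam₂/2 := by positivity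
    linarith [hβcE]
  -- main case split
  rcases lt_trichotomy z xhat with hcase | hcase | hcase
  · -- z < xhat
    have hEz : Real.exp (a*z) < E := by
      rw [hEdef]; exact Real.exp_lt_exp.mpr ((mul_lt_mul_iff_right₀ ha).mpr hcase)
    have hFzneg : F z < 0 := by
      have h3 : 2*D*(F z) < 0 := by
        rw [hFz]
        exact mul_neg_of_pos_of_neg (mul_pos (mul_pos hσ2 ha) (sub_pos.mpr hla)) (sub_neg.mpr hEz)
      by_contra h
      push_neg at h
      have := mul_nonneg (by positivity : (0:ℝ) ≤ 2*D) h
      linarith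
    obtain ⟨xm, hxm⟩ : ∃ x:ℝ, x = Real.log (β*c/a) / a := ⟨_, rfl⟩
    have hexm : Real.exp (a*xm) = β*c/a := by
      rw [hxm, show a*(Real.log (β*c/a)/a) = Real.log (β*c/a) from by field_simp]
      exact Real.exp_log (by positivity)
    have hxmxhat : xm < xhat := by
      have h1 : Real.exp (a*xm) < Real.exp (a*xhat) := by
        rw [hexm, ← hEdef, div_lt_iff₀ ha]
        linarith only [haEβc]
      exact (mul_lt_mul_iff_right₀ ha).mp (Real.exp_lt_exp.mp h1)
    have hFmono : StrictMonoOn F (Set.Ici xm) := by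
      apply strictMonoOn_of_deriv_pos (convex_Ici xm) hFcont.continuousOn
      intro x hx
      rw [interior_Ici] at hx
      rw [(hFd x).deriv]
      have h1 : Real.exp (a*xm) < Real.exp (a*x) :=
        Real.exp_lt_exp.mpr ((mul_lt_mul_iff_right₀ ha).mpr hx)
      rw [hexm, div_lt_iff₀ ha] at h1
      linarith only [h1]
    have hFanti : AntitoneOn F (Set.Iic xm) := by
      apply StrictAntiOn.antitoneOn
      apply strictAntiOn_of_deriv_neg (convex_Iic xm) hFcont.continuousOn
      intro x hx
      rw [interior_Iic] at hx
      rw [(hFd x).deriv]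
      have h1 : Real.exp (a*x) < Real.exp (a*xm) :=
        Real.exp_lt_exp.mpr ((mul_lt_mul_iff_right₀ ha).mpr hx)
      rw [hexm, lt_div_iff₀ ha] at h1
      linarith only [h1]
    have J : 2*D*a*E - σ^2*a^2*(lam₂-a)*E = 2*D*β*c := by
      linear_combination (-(σ^2*a))*hkey + 2*D*hβcE
    have hsplit : Real.exp (a*z) = E*Real.exp (a*(z-xhat)) := by
      rw [hEdef, ← Real.exp_add]; ring_nf
    have hT : a*(z-xhat) + 1 < Real.exp (a*(z-xhat)) :=
      Real.add_one_lt_exp (ne_of_lt (mul_neg_of_pos_of_neg ha (sub_neg.mpr hcase)))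
    have hchain : 2*D*(a*(F xhat)) = 2*D*(β*c*(a*(z-xhat) + 1 - Real.exp (a*(z-xhat)))) := by
      rw [hFdiff xhat]
      linear_combination a*hFz + (σ^2*a^2*(lam₂-a) - 2*D*a)*hsplit + (-(2*D*a))*hEdef + (1 - Real.exp (a*(z-xhat)))*J
    have hFxhat : F xhat < 0 := by
      have h7 : 2*D*(a*(F xhat)) < 0 := by
        rw [hchain]
        exact mul_neg_of_pos_of_neg (by positivity) (mul_neg_of_pos_of_neg (by positivity) (by linarith [hT]))
      by_contra h
      push_neg at h
      have := mul_nonneg (by positivity : (0:ℝ) ≤ 2*D) (mul_nonneg ha.le h)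
      linarith
    obtain ⟨X, hX⟩ : ∃ X:ℝ, X = xhat + (1 - F xhat)/(a*E - β*c) := ⟨_, rfl⟩
    have hXgt : xhat < X := by
      rw [hX]
      have h1 : 0 < (1 - F xhat)/(a*E - β*c) := div_pos (by linarith) haEβc
      linarith
    have hFX : 0 < F X := by
      have hsplit2 : Real.exp (a*X) = E*Real.exp (a*(X - xhat)) := by
        rw [hEdef, ← Real.exp_add]; ring_nf
      have hexp2 : a*(X-xhat) + 1 ≤ Real.exp (a*(X-xhat)) := Real.add_one_le_exp _
      have h8 : F X = F xhat + (Real.exp (a*X) - E) - β*c*(X - xhat) := by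
        rw [hFdiff X, hFdiff xhat, ← hEdef]; ring
      rw [h8, hsplit2]
      have h9 : (a*E - β*c)*(X - xhat) = 1 - F xhat := by
        rw [hX]
        field_simp
        ring
      have h10 : E*(a*(X-xhat)+1) ≤ E*Real.exp (a*(X-xhat)) :=
        mul_le_mul_of_nonneg_left hexp2 hE0.le
      linarith only [h9, h10]
    obtain ⟨w, hwmem, hwval⟩ : ∃ w ∈ Set.Icc xhat X, F w = 0 := by
      have h0mem : (0:ℝ) ∈ Set.Icc (F xhat) (F X) := ⟨le_of_lt hFxhat, le_of_lt hFX⟩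
      obtain ⟨w, hw1, hw2⟩ := intermediate_value_Icc (le_of_lt hXgt) hFcont.continuousOn h0mem
      exact ⟨w, hw1, hw2⟩
    have hwxhat : xhat < w := by
      rcases lt_or_eq_of_le hwmem.1 with h | h
      · exact h
      · rw [← h] at hwval
        exact absurd hwval (ne_of_lt hFxhat)
    have hwz : z < w := lt_trans hcase hwxhat
    have hwxm : xm ≤ w := le_of_lt (lt_trans hxmxhat hwxhat)
    have hFneg : ∀ x, z ≤ x → x ≤ w → F x ≤ 0 := by
      intro x hx1 hx2
      rcases le_or_gt x xm with h | h
      · have hzxm : z ≤ xm := le_trans hx1 h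
        have h2 := hFanti (Set.mem_Iic.mpr hzxm) (Set.mem_Iic.mpr h) hx1
        linarith [hFzneg]
      · rcases lt_or_eq_of_le hx2 with h2 | h2
        · have h3 := hFmono (Set.mem_Ici.mpr (le_of_lt h)) (Set.mem_Ici.mpr hwxm) h2
          linarith [hwval]
        · rw [h2, hwval]
    have hFpos2 : ∀ x, w < x → 0 < F x := by
      intro x hx
      have h3 := hFmono (Set.mem_Ici.mpr hwxm) (Set.mem_Ici.mpr (le_trans hwxm (le_of_lt hx))) hx
      linarith [hwval]
    have hsetEq : {x : ℝ | q₀ x z ≥ 0 ∧ q₁ x z ≤ 0} = Set.Iic w := by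
      ext x
      simp only [Set.mem_setOf_eq, Set.mem_Iic]
      constructor
      · rintro ⟨h0, h1⟩
        by_contra hxw
        push_neg at hxw
        have hnlt : ¬ x < z := by linarith
        rw [hq₁ge x hnlt] at h1
        exact absurd h1 (not_le.mpr (hFpos2 x hxw))
      · intro hxw
        rcases lt_or_ge x z with h | h
        · exact ⟨le_of_lt (by rw [hq₀lt x h]; exact hGpos (le_of_lt hcase) x h), le_of_eq (hq₁lt x h)⟩
        · have hnlt : ¬ x < z := not_lt.mpr h
          exact ⟨by rw [hq₀ge x hnlt], by rw [hq₁ge x hnlt]; exact hFneg x h hxw⟩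
    refine ⟨w, ?_, ?_, ?_, ?_, ?_⟩
    · rw [hsetEq, interior_Iic]
    · intro w' hw'
      rw [hsetEq, interior_Iic] at hw'
      exact iio_inj hw'.symm
    · intro _; exact hwxhat
    · intro h; linarith
    · intro h; rw [h] at hcase; exact absurd hcase (lt_irrefl _)
  · -- z = xhat
    have hEz : Real.exp (a*z) = E := by rw [hEdef, hcase]
    have hFz0 : F z = 0 := by
      have h3 : 2*D*(F z) = 0 := by rw [hFz, hEz]; ring
      rcases mul_eq_zero.mp h3 with h | h
      · exact absurd h (by positivity)
      · exact h
    have haEβc : 0 < a*E - β*c := by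
      have h5 : 0 < c*a*σ^2*lam₂/2 := by positivity
      linarith [hβcE]
    have hFpos : ∀ x, z < x → 0 < F x := by
      intro x hx
      have hxz : 0 < x - z := by linarith
      have hexp : a*(x-z) + 1 < Real.exp (a*(x-z)) :=
        Real.add_one_lt_exp (ne_of_gt (mul_pos ha hxz))
      have hsplit : Real.exp (a*x) = Real.exp (a*z)*Real.exp (a*(x-z)) := by
        rw [← Real.exp_add]; ring_nf
      rw [hFdiff x, hFz0, hsplit, hEz]
      have h4 : E*(a*(x-z)+1) < E*Real.exp (a*(x-z)) := mul_lt_mul_of_pos_left hexp hE0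
      have h5 : 0 < (a*E - β*c)*(x-z) := mul_pos haEβc hxz
      linarith only [h4, h5]
    have hsetEq : {x : ℝ | q₀ x z ≥ 0 ∧ q₁ x z ≤ 0} = Set.Iic z := by
      ext x
      simp only [Set.mem_setOf_eq, Set.mem_Iic]
      constructor
      · rintro ⟨h0, h1⟩
        by_contra hxz
        push_neg at hxz
        have hnlt : ¬ x < z := by linarith
        rw [hq₁ge x hnlt] at h1
        exact absurd h1 (not_le.mpr (hFpos x hxz))
      · intro hxz
        rcases lt_or_eq_of_le hxz with h | h
        · exact ⟨le_of_lt (by rw [hq₀lt x h]; exact hGpos (le_of_eq hcase) x h), le_of_eq (hq₁lt x h)⟩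
        · subst h
          refine ⟨?_, ?_⟩
          · rw [hq₀ge x (lt_irrefl x)]
          · rw [hq₁ge x (lt_irrefl x), hFz0]
    refine ⟨xhat, ?_, ?_, ?_, ?_, ?_⟩
    · rw [hsetEq, hcase, interior_Iic]
    · intro w' hw'
      rw [hsetEq, hcase, interior_Iic] at hw'
      exact iio_inj hw'.symm
    · intro h; rw [hcase] at h; exact absurd h (lt_irrefl _)
    · intro h; rw [hcase] at h; exact absurd h (lt_irrefl _)
    · intro _; rfl
  · -- xhat < z
    have hEz : E < Real.exp (a*z) := by
      rw [hEdef]; exact Real.exp_lt_exp.mpr ((mul_lt_mul_iff_right₀ ha).mpr hcase)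
    have hFzpos : 0 < F z := by
      have h3 : 0 < 2*D*(F z) := by
        rw [hFz]
        exact mul_pos (mul_pos (mul_pos hσ2 ha) (sub_pos.mpr hla)) (sub_pos.mpr hEz)
      by_contra h
      push_neg at h
      have := mul_nonneg hD.le (neg_nonneg.mpr h)
      linarith only [h3, this]
    have hFpos : ∀ x, ¬ x < z → 0 < F x := by
      intro x hx
      push_neg at hx
      have hsplit : Real.exp (a*x) = Real.exp (a*z)*Real.exp (a*(x-z)) := by
        rw [← Real.exp_add]; ring_nf
      have hexp2 : a*(x-z) + 1 ≤ Real.exp (a*(x-z)) := Real.add_one_le_exp _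
      rw [hFdiff x, hsplit]
      have h10 : Real.exp (a*z)*(a*(x-z)+1) ≤ Real.exp (a*z)*Real.exp (a*(x-z)) :=
        mul_le_mul_of_nonneg_left hexp2 (Real.exp_pos _).le
      have h11 : 0 ≤ (a*E - β*c)*(x-z) := mul_nonneg haEβc.le (sub_nonneg.mpr hx)
      have h12 : a*E*(x-z) ≤ a*Real.exp (a*z)*(x-z) :=
        mul_le_mul_of_nonneg_right (mul_le_mul_of_nonneg_left hEz.le ha.le) (sub_nonneg.mpr hx)
      linarith only [h10, h11, h12, hFzpos]
    have hPA : c*lam₂ < (K₁*a*Real.exp (a*z))*(lam₂ - a) := by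
      have h1 : c*lam₂*D < (K₁*a*Real.exp (a*z))*(lam₂-a)*D := by
        calc c*lam₂*D = a*(lam₂-a)*E := hkey.symm
          _ < a*(lam₂-a)*Real.exp (a*z) := mul_lt_mul_of_pos_left hEz (mul_pos ha (sub_pos.mpr hla))
          _ = (K₁*a*Real.exp (a*z))*(lam₂-a)*D := by
              linear_combination (-(a*Real.exp (a*z)*(lam₂-a)))*hK₁D
      exact (mul_lt_mul_iff_left₀ hD).mp h1
    have hQQneg : K₂ z * lam₂ < 0 := by
      have h1' : c*(lam₂-a) < (K₁*a*Real.exp (a*z))*(lam₂-a) := by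
        linarith only [hPA, mul_pos hc ha]
      have h1 : c < K₁*a*Real.exp (a*z) := (mul_lt_mul_iff_left₀ (sub_pos.mpr hla)).mp h1'
      have h2 : K₂ z * lam₂ * Real.exp (lam₂*z) < 0 := by
        rw [hK₂z]; linarith
      by_contra h
      push_neg at h
      have := mul_nonneg h (Real.exp_pos (lam₂*z)).le
      linarith
    have hRpos : 0 < -(K₂ z*lam₂) := by linarith
    -- the critical point of G
    obtain ⟨xstar, hxstar⟩ : ∃ x:ℝ, x = Real.log ((K₁*a*a)/(-(K₂ z*lam₂)*lam₂))/(lam₂-a) := ⟨_, rfl⟩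
    have hlane : lam₂ - a ≠ 0 := ne_of_gt (sub_pos.mpr hla)
    have hratio : Real.exp ((lam₂-a)*xstar) = (K₁*a*a)/(-(K₂ z*lam₂)*lam₂) := by
      rw [hxstar, show (lam₂-a)*(Real.log ((K₁*a*a)/(-(K₂ z*lam₂)*lam₂))/(lam₂-a)) = Real.log ((K₁*a*a)/(-(K₂ z*lam₂)*lam₂)) from by field_simp]
      exact Real.exp_log (div_pos (by positivity) (mul_pos hRpos hl0))
    have hsign : ∀ x, -(K₁*a*a*Real.exp (a*x)) - K₂ z*lam₂*lam₂*Real.exp (lam₂*x) = Real.exp (a*x)*((-(K₂ z*lam₂))*lam₂*Real.exp ((lam₂-a)*x) - K₁*a*a) := by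
      intro x
      rw [show Real.exp (lam₂*x) = Real.exp (a*x)*Real.exp ((lam₂-a)*x) from by rw [← Real.exp_add]; ring_nf]
      ring
    have hGanti : StrictAntiOn G (Set.Iic xstar) := by
      apply strictAntiOn_of_deriv_neg (convex_Iic xstar) hGcont.continuousOn
      intro x hx
      rw [interior_Iic] at hx
      rw [(hGd x).deriv, hsign x]
      apply mul_neg_of_pos_of_neg (Real.exp_pos _)
      have h1 : Real.exp ((lam₂-a)*x) < (K₁*a*a)/(-(K₂ z*lam₂)*lam₂) := by
        rw [← hratio]
        exact Real.exp_lt_exp.mpr ((mul_lt_mul_iff_right₀ (sub_pos.mpr hla)).mpr hx)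
      rw [lt_div_iff₀ (mul_pos hRpos hl0)] at h1
      linarith only [h1]
    have hGmono : StrictMonoOn G (Set.Ici xstar) := by
      apply strictMonoOn_of_deriv_pos (convex_Ici xstar) hGcont.continuousOn
      intro x hx
      rw [interior_Ici] at hx
      rw [(hGd x).deriv, hsign x]
      apply mul_pos (Real.exp_pos _)
      have h1 : (K₁*a*a)/(-(K₂ z*lam₂)*lam₂) < Real.exp ((lam₂-a)*x) := by
        rw [← hratio]
        exact Real.exp_lt_exp.mpr ((mul_lt_mul_iff_right₀ (sub_pos.mpr hla)).mpr hx)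
      rw [div_lt_iff₀ (mul_pos hRpos hl0)] at h1
      linarith only [h1]
    have hzstar : xstar < z := by
      have hsp : Real.exp (lam₂*z) = Real.exp (a*z)*Real.exp ((lam₂-a)*z) := by
        rw [← Real.exp_add]; ring_nf
      have h2 : (-(K₂ z*lam₂))*Real.exp (lam₂*z) = K₁*a*Real.exp (a*z) - c := by
        linear_combination (-1 : ℝ)*hK₂z
      have h2' : (-(K₂ z*lam₂))*lam₂*Real.exp ((lam₂-a)*z)*Real.exp (a*z) = lam₂*(K₁*a*Real.exp (a*z) - c) := by
        linear_combination lam₂*h2 - lam₂*(-(K₂ z*lam₂))*hsp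
      have h3 : K₁*a*a*Real.exp (a*z) < lam₂*(K₁*a*Real.exp (a*z) - c) := by
        linarith only [hPA]
      have h4 : (K₁*a*a)*Real.exp (a*z) < ((-(K₂ z*lam₂))*lam₂*Real.exp ((lam₂-a)*z))*Real.exp (a*z) := by
        linarith only [h3, h2']
      have h4' : K₁*a*a < (-(K₂ z*lam₂))*lam₂*Real.exp ((lam₂-a)*z) :=
        (mul_lt_mul_iff_left₀ (Real.exp_pos (a*z))).mp h4
      have h5 : Real.exp ((lam₂-a)*xstar) < Real.exp ((lam₂-a)*z) := by
        rw [hratio, div_lt_iff₀ (mul_pos hRpos hl0)]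
        linarith only [h4']
      exact (mul_lt_mul_iff_right₀ (sub_pos.mpr hla)).mp (Real.exp_lt_exp.mp h5)
    have hGstar : G xstar < 0 := by
      have h1 := hGmono (Set.mem_Ici.mpr le_rfl) (Set.mem_Ici.mpr (le_of_lt hzstar)) hzstar
      linarith [hGz]
    obtain ⟨x₀, hx₀⟩ : ∃ x:ℝ, x = min xstar (Real.log (c/(K₁*a))/a - 1) := ⟨_, rfl⟩
    have hx₀star : x₀ ≤ xstar := by rw [hx₀]; exact min_le_left _ _
    have hGx₀ : 0 < G x₀ := by
      have h2 : x₀ ≤ Real.log (c/(K₁*a))/a - 1 := by rw [hx₀]; exact min_le_right _ _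
      have h1 : a*x₀ < Real.log (c/(K₁*a)) := by
        have h2' := mul_le_mul_of_nonneg_left h2 ha.le
        have h2'' : a*(Real.log (c/(K₁*a))/a - 1) = Real.log (c/(K₁*a)) - a := by
          field_simp
        rw [h2''] at h2'
        linarith
      have h3 : Real.exp (a*x₀) < c/(K₁*a) := by
        calc Real.exp (a*x₀) < Real.exp (Real.log (c/(K₁*a))) := Real.exp_lt_exp.mpr h1
          _ = c/(K₁*a) := Real.exp_log (by positivity)
      rw [lt_div_iff₀ (by positivity : 0 < K₁*a)] at h3
      have h5 : 0 < -(K₂ z*lam₂)*Real.exp (lam₂*x₀) := mul_pos hRpos (Real.exp_pos _)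
      rw [hGx]
      linarith only [h3, h5]
    obtain ⟨w, hwmem, hwval⟩ : ∃ w ∈ Set.Icc x₀ xstar, G w = 0 := by
      have h0mem : (0:ℝ) ∈ Set.Icc (G xstar) (G x₀) := ⟨le_of_lt hGstar, le_of_lt hGx₀⟩
      obtain ⟨w, hw1, hw2⟩ := intermediate_value_Icc' hx₀star hGcont.continuousOn h0mem
      exact ⟨w, hw1, hw2⟩
    have hwstar : w < xstar := by
      rcases lt_or_eq_of_le hwmem.2 with h | h
      · exact h
      · rw [h] at hwval
        exact absurd hwval (ne_of_lt hGstar)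
    have hwz : w < z := lt_trans hwstar hzstar
    -- G xhat < 0, hence w < xhat
    have hGxhat : G xhat < 0 := by
      have ht : 0 < z - xhat := sub_pos.mpr hcase
      have hAx := aux_exp_ratio a lam₂ (z-xhat) ha hla (ne_of_gt ht)
      have hsplu : Real.exp (a*z) = E*Real.exp (a*(z-xhat)) := by
        rw [hEdef, ← Real.exp_add]; ring_nf
      have hsplv : Real.exp (lam₂*z) = Real.exp (lam₂*xhat)*Real.exp (lam₂*(z-xhat)) := by
        rw [← Real.exp_add]; ring_nf
      have e1 : K₂ z*lam₂*Real.exp (lam₂*xhat) * Real.exp (lam₂*(z-xhat)) = c - K₁*a*Real.exp (a*z) := by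
        linear_combination hK₂z - (K₂ z*lam₂)*hsplv
      have e2 : Real.exp (lam₂*(z-xhat)) * (G xhat) = c*(Real.exp (lam₂*(z-xhat)) - 1) - (K₁*a*E)*(Real.exp (lam₂*(z-xhat)) - Real.exp (a*(z-xhat))) := by
        rw [hGx]
        linear_combination (-1 : ℝ)*e1 + (K₁*a)*hsplu + (K₁*a*Real.exp (lam₂*(z-xhat)))*hEdef
      have e3 : (K₁*a*E)*(lam₂-a)*D = c*lam₂*D := by
        linear_combination (a*E*(lam₂-a))*hK₁D + hkey
      have e4 : ((lam₂-a)*D)*(Real.exp (lam₂*(z-xhat))*(G xhat)) = c*D*(lam₂*(Real.exp (a*(z-xhat)) - 1) - a*(Real.exp (lam₂*(z-xhat)) - 1)) := by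
        linear_combination ((lam₂-a)*D)*e2 - (Real.exp (lam₂*(z-xhat)) - Real.exp (a*(z-xhat)))*e3
      have e5 : c*D*(lam₂*(Real.exp (a*(z-xhat)) - 1) - a*(Real.exp (lam₂*(z-xhat)) - 1)) < 0 :=
        mul_neg_of_pos_of_neg (mul_pos hc hD) (by linarith only [hAx])
      have e6 : ((lam₂-a)*D)*(Real.exp (lam₂*(z-xhat))*(G xhat)) < 0 := by rw [e4]; exact e5
      by_contra h
      push_neg at h
      have := mul_nonneg (mul_nonneg (sub_nonneg.mpr hla.le) hD.le) (mul_nonneg (Real.exp_pos (lam₂*(z-xhat))).le h)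
      linarith
    have hwxhat : w < xhat := by
      by_contra h
      push_neg at h
      have h1 := hGanti.antitoneOn (Set.mem_Iic.mpr (le_trans h hwmem.2)) (Set.mem_Iic.mpr hwmem.2) h
      rw [hwval] at h1
      linarith
    have hGnonneg : ∀ x, x ≤ w → 0 ≤ G x := by
      intro x hx
      rcases lt_or_eq_of_le hx with h | h
      · have h1 := hGanti (Set.mem_Iic.mpr (le_trans hx hwmem.2)) (Set.mem_Iic.mpr hwmem.2) h
        rw [hwval] at h1
        linarith
      · rw [h, hwval]
    have hGneg : ∀ x, w < x → x < z → G x < 0 := by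
      intro x h1 h2
      rcases le_or_gt x xstar with h3 | h3
      · have h4 := hGanti (Set.mem_Iic.mpr hwmem.2) (Set.mem_Iic.mpr h3) h1
        rw [hwval] at h4
        linarith
      · have h4 := hGmono (Set.mem_Ici.mpr (le_of_lt h3)) (Set.mem_Ici.mpr (le_of_lt hzstar)) h2
        rw [hGz] at h4
        linarith
    have hsetEq : {x : ℝ | q₀ x z ≥ 0 ∧ q₁ x z ≤ 0} = Set.Iic w := by
      ext x
      simp only [Set.mem_setOf_eq, Set.mem_Iic]
      constructor
      · rintro ⟨h0, h1⟩
        by_contra hxw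
        push_neg at hxw
        rcases lt_or_ge x z with h | h
        · rw [hq₀lt x h] at h0
          exact absurd h0 (not_le.mpr (hGneg x hxw h))
        · rw [hq₁ge x (not_lt.mpr h)] at h1
          exact absurd h1 (not_le.mpr (hFpos x (not_lt.mpr h)))
      · intro hxw
        have hxz : x < z := lt_of_le_of_lt hxw hwz
        exact ⟨by rw [hq₀lt x hxz]; exact hGnonneg x hxw, le_of_eq (hq₁lt x hxz)⟩
    refine ⟨w, ?_, ?_, ?_, ?_, ?_⟩
    · rw [hsetEq, interior_Iic]
    · intro w' hw'
      rw [hsetEq, interior_Iic] at hw'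
      exact iio_inj hw'.symm
    · intro h; linarith
    · intro _; exact hwxhat
    · intro h; rw [h] at hcase; exact absurd hcase (lt_irrefl _)
end
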